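/- arXiv:1308.4535 — 7 statements merged into one kernel-verified Lean document; each statement's English description precedes it below -/
import Mathlib

section
/- Let S_1,...,S_{p+q} be real symmetric m×m matrices satisfying the Clifford relations S_i^2 = 1_m, with S_i S_j = S_j S_i when the indices lie on opposite sides of p and S_i S_j = −S_j S_i when i ≠ j lie on the same side. Define the Clifford quartic form P̃(w) = Σ_{i=1}^p (wᵀS_i w)^2 − Σ_{j=1}^q (wᵀS_{p+j} w)^2 on ℝ^m. Then the gradient satisfies P̃(grad P̃(w)) = 2^8 · P̃(w)^3 for all w ∈ ℝ^m. -/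
open Matrix BigOperators

lemma dotProduct_sum' {m : Type*} [Fintype m] {ι : Type*} (s : Finset ι)
    (v : m → ℝ) (f : ι → m → ℝ) :
    v ⬝ᵥ (∑ i ∈ s, f i) = ∑ i ∈ s, v ⬝ᵥ f i := by
  simp [dotProduct, Finset.mul_sum]
  exact Finset.sum_comm

lemma sum_dotProduct' {m : Type*} [Fintype m] {ι : Type*} (s : Finset ι)
    (v : m → ℝ) (f : ι → m → ℝ) :
    (∑ i ∈ s, f i) ⬝ᵥ v = ∑ i ∈ s, f i ⬝ᵥ v := by
  simp [dotProduct, Finset.sum_mul]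
  exact Finset.sum_comm

lemma mulVec_sum' {m : Type*} [Fintype m] {ι : Type*} (s : Finset ι)
    (M : Matrix m m ℝ) (f : ι → m → ℝ) :
    M.mulVec (∑ i ∈ s, f i) = ∑ i ∈ s, M.mulVec (f i) :=
  map_sum M.mulVecLin f s

lemma quad_hasFDeriv (m : ℕ) (M : Matrix (Fin m) (Fin m) ℝ) (x : Fin m → ℝ) :
    HasFDerivAt (fun y : Fin m → ℝ => y ⬝ᵥ M.mulVec y)
      (∑ a : Fin m, ∑ b : Fin m, M a b •
        ((x a • ContinuousLinearMap.proj b + x b • ContinuousLinearMap.proj a :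
          (Fin m → ℝ) →L[ℝ] ℝ))) x := by
  have h : (fun y : Fin m → ℝ => y ⬝ᵥ M.mulVec y)
      = fun y => ∑ a : Fin m, ∑ b : Fin m, M a b * (y a * y b) := by
    funext y
    simp only [dotProduct, Matrix.mulVec, Finset.mul_sum]
    refine Finset.sum_congr rfl fun a _ => Finset.sum_congr rfl fun b _ => by ring
  rw [h]
  apply HasFDerivAt.fun_sum; intro a _
  apply HasFDerivAt.fun_sum; intro b _
  have ha := hasFDerivAt_apply (𝕜 := ℝ) (F' := fun _ : Fin m => ℝ) a x
  have hb := hasFDerivAt_apply (𝕜 := ℝ) (F' := fun _ : Fin m => ℝ) b x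
  exact (ha.mul hb).const_mul (M a b)

lemma eval_single (m : ℕ) (M : Matrix (Fin m) (Fin m) ℝ) (hM : Mᵀ = M)
    (w : Fin m → ℝ) (k : Fin m) :
    (∑ a : Fin m, ∑ b : Fin m, M a b *
      ((w a • ContinuousLinearMap.proj b + w b • ContinuousLinearMap.proj a :
        (Fin m → ℝ) →L[ℝ] ℝ)) (Pi.single k 1)) = 2 * M.mulVec w k := by
  have hMe : ∀ a b, M a b = M b a := by
    intro a b
    nth_rewrite 1 [← hM]
    exact Matrix.transpose_apply M a b
  simp only [ContinuousLinearMap.add_apply, ContinuousLinearMap.smul_apply,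
    ContinuousLinearMap.proj_apply, smul_eq_mul, Pi.single_apply]
  have hsplit : ∀ a : Fin m, (∑ b : Fin m,
      M a b * (w a * (if b = k then 1 else 0) + w b * (if a = k then 1 else 0)))
      = M a k * w a + (if a = k then ∑ b : Fin m, M a b * w b else 0) := by
    intro a
    rw [show (∑ b : Fin m,
      M a b * (w a * (if b = k then 1 else 0) + w b * (if a = k then 1 else 0)))
      = ∑ b : Fin m, ((if b = k then M a b * w a else 0)
        + (if a = k then M a b * w b else 0)) from
      Finset.sum_congr rfl fun b _ => by split <;> split <;> ring]
    rw [Finset.sum_add_distrib, Finset.sum_ite_eq']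
    simp only [Finset.mem_univ, if_true]
    congr 1
    split <;> simp
  rw [Finset.sum_congr rfl fun a _ => hsplit a, Finset.sum_add_distrib,
    Finset.sum_ite_eq']
  simp only [Finset.mem_univ, if_true]
  rw [Finset.sum_congr rfl fun a _ => show M a k * w a = M k a * w a by rw [hMe]]
  simp [Matrix.mulVec, dotProduct]
  ring

/-- The Clifford quartic form satisfies `P̃(grad P̃(w)) = 2^8 · P̃(w)^3`. -/
theorem clifford_quartic_grad (p q m : ℕ)
    (S : Fin (p + q) → Matrix (Fin m) (Fin m) ℝ)
    (hsym : ∀ i, (S i)ᵀ = S i)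
    (hsq : ∀ i, S i * S i = 1)
    (hcomm : ∀ i j : Fin (p + q),
      (((i : ℕ) < p ∧ p ≤ (j : ℕ)) ∨ (p ≤ (i : ℕ) ∧ (j : ℕ) < p)) →
      S i * S j = S j * S i)
    (hanti : ∀ i j : Fin (p + q), i ≠ j →
      (((i : ℕ) < p ∧ (j : ℕ) < p) ∨ (p ≤ (i : ℕ) ∧ p ≤ (j : ℕ))) →
      S i * S j = -(S j * S i))
    (ε : Fin (p + q) → ℝ)
    (hε : ∀ i, ε i = if (i : ℕ) < p then 1 else -1)
    (Ptilde : (Fin m → ℝ) → ℝ)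
    (hPt : ∀ x : Fin m → ℝ, Ptilde x = ∑ i : Fin (p + q), ε i * (x ⬝ᵥ (S i).mulVec x) ^ 2)
    (grad : (Fin m → ℝ) → (Fin m → ℝ))
    (hgrad : ∀ (x : Fin m → ℝ) (k : Fin m), grad x k = fderiv ℝ Ptilde x (Pi.single k 1)) :
    ∀ w : Fin m → ℝ, Ptilde (grad w) = 2 ^ 8 * (Ptilde w) ^ 3 := by
  intro w
  classical
  set s : Fin (p + q) → ℝ := fun i => w ⬝ᵥ (S i).mulVec w with hs
  have hε2 : ∀ i, ε i * ε i = 1 := by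
    intro i; rw [hε i]; split <;> norm_num
  have hswap : ∀ a b : Fin (p + q), a ≠ b →
      S a * S b = (if ((a : ℕ) < p ↔ (b : ℕ) < p) then (-1 : ℝ) else 1) • (S b * S a) := by
    intro a b hab
    by_cases hA : (a : ℕ) < p <;> by_cases hB : (b : ℕ) < p
    · rw [if_pos (by tauto), hanti a b hab (Or.inl ⟨hA, hB⟩)]; simp
    · rw [if_neg (by tauto), hcomm a b (Or.inl ⟨hA, le_of_not_gt hB⟩)]; simp
    · rw [if_neg (by tauto), hcomm a b (Or.inr ⟨le_of_not_gt hA, hB⟩)]; simp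
    · rw [if_pos (by tauto), hanti a b hab (Or.inr ⟨le_of_not_gt hA, le_of_not_gt hB⟩)]; simp
  set T : Fin (p + q) → Fin (p + q) → Fin (p + q) → ℝ :=
    fun i j k => w ⬝ᵥ ((S i * S j * S k).mulVec w) with hT
  have hTtr : ∀ i j k, T k j i = T i j k := by
    intro i j k
    have h1 : S k * S j * S i = (S i * S j * S k)ᵀ := by
      rw [Matrix.transpose_mul, Matrix.transpose_mul, hsym, hsym, hsym, mul_assoc]
    simp only [hT]
    rw [h1, Matrix.dotProduct_mulVec, Matrix.vecMul_transpose, dotProduct_comm]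
  have hT0 : ∀ i j k : Fin (p + q), i ≠ j → j ≠ k → i ≠ k → T i j k = 0 := by
    intro i j k hij hjk hik
    have e1 := hswap k j (fun h => hjk h.symm)
    have e2 := hswap k i (fun h => hik h.symm)
    have e3 := hswap j i (fun h => hij h.symm)
    have hσ : (if ((k : ℕ) < p ↔ (j : ℕ) < p) then (-1 : ℝ) else 1)
        * ((if ((k : ℕ) < p ↔ (i : ℕ) < p) then (-1 : ℝ) else 1)
        * (if ((j : ℕ) < p ↔ (i : ℕ) < p) then (-1 : ℝ) else 1)) = -1 := by
      by_cases hi : (i : ℕ) < p <;> by_cases hj : (j : ℕ) < p <;>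
        by_cases hk : (k : ℕ) < p <;> simp [hi, hj, hk]
    have h2 : S k * S j * S i = -(S i * S j * S k) := by
      calc S k * S j * S i
          = ((if ((k : ℕ) < p ↔ (j : ℕ) < p) then (-1 : ℝ) else 1) • (S j * S k)) * S i := by
            rw [← e1]
        _ = (if ((k : ℕ) < p ↔ (j : ℕ) < p) then (-1 : ℝ) else 1) • (S j * (S k * S i)) := by
            rw [smul_mul_assoc, mul_assoc]
        _ = (if ((k : ℕ) < p ↔ (j : ℕ) < p) then (-1 : ℝ) else 1) •
              (S j * ((if ((k : ℕ) < p ↔ (i : ℕ) < p) then (-1 : ℝ) else 1) • (S i * S k))) := by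
            rw [← e2]
        _ = (if ((k : ℕ) < p ↔ (j : ℕ) < p) then (-1 : ℝ) else 1) •
              ((if ((k : ℕ) < p ↔ (i : ℕ) < p) then (-1 : ℝ) else 1) • ((S j * S i) * S k)) := by
            rw [mul_smul_comm, ← mul_assoc]
        _ = (if ((k : ℕ) < p ↔ (j : ℕ) < p) then (-1 : ℝ) else 1) •
              ((if ((k : ℕ) < p ↔ (i : ℕ) < p) then (-1 : ℝ) else 1) •
              (((if ((j : ℕ) < p ↔ (i : ℕ) < p) then (-1 : ℝ) else 1) • (S i * S j)) * S k)) := by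
            rw [← e3]
        _ = ((if ((k : ℕ) < p ↔ (j : ℕ) < p) then (-1 : ℝ) else 1)
              * ((if ((k : ℕ) < p ↔ (i : ℕ) < p) then (-1 : ℝ) else 1)
              * (if ((j : ℕ) < p ↔ (i : ℕ) < p) then (-1 : ℝ) else 1))) • (S i * S j * S k) := by
            rw [smul_mul_assoc, smul_smul, smul_smul, mul_assoc]
        _ = -(S i * S j * S k) := by rw [hσ, neg_one_smul]
    have h3 : T k j i = -(T i j k) := by
      simp only [hT]
      rw [h2, Matrix.neg_mulVec, dotProduct_neg]
    have h4 := hTtr i j k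
    linarith [h3, h4]
  have hTjjk : ∀ j k, T j j k = s k := by
    intro j k
    simp only [hT, hs]
    rw [hsq j, one_mul]
  have hTijj : ∀ i j, T i j j = s i := by
    intro i j
    simp only [hT, hs]
    rw [mul_assoc, hsq j, mul_one]
  have hTiji : ∀ i j, i ≠ j → T i j i = -(ε i * ε j) * s j := by
    intro i j hij
    by_cases hi : (i : ℕ) < p <;> by_cases hj : (j : ℕ) < p
    · have hm : S i * S j * S i = -(S j) := by
        rw [hanti i j hij (Or.inl ⟨hi, hj⟩), neg_mul, mul_assoc, hsq i, mul_one]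
      simp only [hT, hs]
      rw [hm, Matrix.neg_mulVec, dotProduct_neg, hε i, hε j, if_pos hi, if_pos hj]
      ring
    · have hm : S i * S j * S i = S j := by
        rw [hcomm i j (Or.inl ⟨hi, le_of_not_gt hj⟩), mul_assoc, hsq i, mul_one]
      simp only [hT, hs]
      rw [hm, hε i, hε j, if_pos hi, if_neg hj]
      ring
    · have hm : S i * S j * S i = S j := by
        rw [hcomm i j (Or.inr ⟨le_of_not_gt hi, hj⟩), mul_assoc, hsq i, mul_one]
      simp only [hT, hs]
      rw [hm, hε i, hε j, if_neg hi, if_pos hj]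
      ring
    · have hm : S i * S j * S i = -(S j) := by
        rw [hanti i j hij (Or.inr ⟨le_of_not_gt hi, le_of_not_gt hj⟩), neg_mul, mul_assoc,
          hsq i, mul_one]
      simp only [hT, hs]
      rw [hm, Matrix.neg_mulVec, dotProduct_neg, hε i, hε j, if_neg hi, if_neg hj]
      ring
  -- the gradient formula
  have hgw : ∀ k, grad w k = 4 * ∑ i : Fin (p + q), (ε i * s i) * (S i).mulVec w k := by
    have hfun : Ptilde = fun x => ∑ i : Fin (p + q), ε i * (x ⬝ᵥ (S i).mulVec x) ^ 2 :=
      funext hPt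
    intro k
    have hD : HasFDerivAt
        (fun x : Fin m → ℝ => ∑ i : Fin (p + q), ε i * (x ⬝ᵥ (S i).mulVec x) ^ 2)
        (∑ i : Fin (p + q), ε i • ((2 * s i) •
          (∑ a : Fin m, ∑ b : Fin m, (S i) a b •
            ((w a • ContinuousLinearMap.proj b + w b • ContinuousLinearMap.proj a :
              (Fin m → ℝ) →L[ℝ] ℝ))))) w := by
      apply HasFDerivAt.fun_sum; intro i _
      have hq := quad_hasFDeriv m (S i) w
      have hfe : (fun x : Fin m → ℝ => (x ⬝ᵥ (S i).mulVec x) ^ 2)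
          = fun x => (x ⬝ᵥ (S i).mulVec x) * (x ⬝ᵥ (S i).mulVec x) := by
        funext x; ring
      have h2 : HasFDerivAt (fun x : Fin m → ℝ => (x ⬝ᵥ (S i).mulVec x) ^ 2)
          ((2 * s i) • (∑ a : Fin m, ∑ b : Fin m, (S i) a b •
            ((w a • ContinuousLinearMap.proj b + w b • ContinuousLinearMap.proj a :
              (Fin m → ℝ) →L[ℝ] ℝ)))) w := by
        rw [hfe]
        refine (hq.mul hq).congr_fderiv ?_
        rw [two_mul, add_smul]
      exact h2.const_mul (ε i)
    rw [hgrad w k, hfun, hD.fderiv]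
    rw [ContinuousLinearMap.sum_apply]
    have hev : ∀ i : Fin (p + q),
        (ε i • ((2 * s i) • (∑ a : Fin m, ∑ b : Fin m, (S i) a b •
          ((w a • ContinuousLinearMap.proj b + w b • ContinuousLinearMap.proj a :
            (Fin m → ℝ) →L[ℝ] ℝ))))) (Pi.single k 1)
        = (ε i * s i) * (4 * (S i).mulVec w k) := by
      intro i
      rw [ContinuousLinearMap.smul_apply, ContinuousLinearMap.smul_apply]
      rw [show ((∑ a : Fin m, ∑ b : Fin m, (S i) a b •
          ((w a • ContinuousLinearMap.proj b + w b • ContinuousLinearMap.proj a :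
            (Fin m → ℝ) →L[ℝ] ℝ))) (Pi.single k 1)) = 2 * (S i).mulVec w k from ?_]
      · simp only [smul_eq_mul]; ring
      · rw [← eval_single m (S i) (hsym i) w k]
        simp only [ContinuousLinearMap.sum_apply, ContinuousLinearMap.smul_apply, smul_eq_mul]
    rw [Finset.sum_congr rfl fun i _ => hev i, Finset.mul_sum]
    exact Finset.sum_congr rfl fun i _ => by ring
  -- vector form of the gradient
  have hgs : grad w = (4 : ℝ) • ∑ i : Fin (p + q), (ε i * s i) • (S i).mulVec w := by
    funext k
    rw [hgw k]
    simp only [Pi.smul_apply, Finset.sum_apply, Pi.smul_apply, smul_eq_mul]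
  -- the key dot product computation
  have hdot : ∀ j, (grad w) ⬝ᵥ (S j).mulVec (grad w) = 16 * ((ε j * s j) * Ptilde w) := by
    intro j
    have hviT : ∀ i k : Fin (p + q),
        ((S i).mulVec w) ⬝ᵥ ((S j).mulVec ((S k).mulVec w)) = T i j k := by
      intro i k
      rw [Matrix.mulVec_mulVec]
      nth_rewrite 1 [← hsym i]
      rw [Matrix.mulVec_transpose, ← Matrix.dotProduct_mulVec, Matrix.mulVec_mulVec,
        ← mul_assoc]
    have hzero : ∀ k ∈ (Finset.univ : Finset (Fin (p + q))), k ≠ j →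
        (ε k * s k) * (∑ i : Fin (p + q), (ε i * s i) * T i j k) = 0 := by
      intro k _ hkj
      have hterm : ∀ i, (ε i * s i) * T i j k
          = (if i = j then (ε j * s j) * s k else 0)
            + (if i = k then (ε k * s k) * (-(ε k * ε j) * s j) else 0) := by
        intro i
        by_cases hij : i = j
        · subst hij
          rw [if_pos rfl, if_neg (Ne.symm hkj), hTjjk]
          ring
        · rw [if_neg hij]
          by_cases hik : i = k
          · subst hik
            rw [if_pos rfl, hTiji i j hij]
            ring
          · rw [hT0 i j k hij (fun h => hkj h.symm) hik, if_neg hik]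
            ring
      rw [Finset.sum_congr rfl fun i _ => hterm i, Finset.sum_add_distrib,
        Finset.sum_ite_eq', Finset.sum_ite_eq']
      simp only [Finset.mem_univ, if_true]
      linear_combination (-(ε k * ε j * s k ^ 2 * s j)) * hε2 k
    have hAj : (∑ k : Fin (p + q), (ε k * s k) *
        (∑ i : Fin (p + q), (ε i * s i) * T i j k)) = (ε j * s j) * Ptilde w := by
      rw [Finset.sum_eq_single j hzero (fun h => absurd (Finset.mem_univ j) h)]
      have h1 : (∑ i : Fin (p + q), (ε i * s i) * T i j j) = Ptilde w := by
        rw [hPt w]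
        refine Finset.sum_congr rfl fun i _ => ?_
        rw [hTijj i j]
        simp only [hs]
        ring
      rw [h1]
    have hcore : (∑ i : Fin (p + q), (ε i * s i) • (S i).mulVec w) ⬝ᵥ
        ((S j).mulVec (∑ i : Fin (p + q), (ε i * s i) • (S i).mulVec w))
        = (ε j * s j) * Ptilde w := by
      rw [mulVec_sum', dotProduct_sum']
      have hstep : ∀ k : Fin (p + q),
          (∑ i : Fin (p + q), (ε i * s i) • (S i).mulVec w) ⬝ᵥ
            ((S j).mulVec ((ε k * s k) • (S k).mulVec w))
          = (ε k * s k) * (∑ i : Fin (p + q), (ε i * s i) * T i j k) := by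
        intro k
        rw [Matrix.mulVec_smul, dotProduct_smul, smul_eq_mul, sum_dotProduct']
        rw [Finset.sum_congr rfl fun i _ =>
          show ((ε i * s i) • (S i).mulVec w) ⬝ᵥ ((S j).mulVec ((S k).mulVec w))
              = (ε i * s i) * T i j k from by
            rw [smul_dotProduct, smul_eq_mul, hviT i k]]
      rw [Finset.sum_congr rfl fun k _ => hstep k]
      exact hAj
    rw [hgs, Matrix.mulVec_smul, smul_dotProduct, dotProduct_smul, hcore,
      smul_eq_mul, smul_eq_mul]
    ring
  -- final assembly
  rw [hPt (grad w)]
  have hfin : ∀ j, ε j * ((grad w) ⬝ᵥ (S j).mulVec (grad w)) ^ 2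
      = 256 * (Ptilde w) ^ 2 * (ε j * s j ^ 2) := by
    intro j
    rw [hdot j]
    linear_combination (256 * s j ^ 2 * (Ptilde w) ^ 2 * ε j) * hε2 j
  rw [Finset.sum_congr rfl fun j _ => hfin j, ← Finset.mul_sum]
  have hsum : (∑ j : Fin (p + q), ε j * s j ^ 2) = Ptilde w := by
    rw [hPt w]
  rw [hsum]
  ring
end

section
/- Let X, Y_1,...,Y_r be real symmetric d×d matrices and B_1,...,B_r real skew-symmetric d×d matrices satisfying the polynomial identity (uᵀXu)(uᵀv) − (uᵀu)(uᵀXv) = Σ_{i=1}^r (uᵀY_i u)(uᵀB_i v) for all u, v ∈ ℝ^d. Let s be the number of indices i such that Y_i is not a scalar matrix. If d > 2s, then X is a scalar multiple of the identity and both sides of the identity vanish identically. -/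
open Matrix BigOperators

section Auxiliary

lemma swap_dot {d : ℕ} (M : Matrix (Fin d) (Fin d) ℝ) (u v : Fin d → ℝ) :
    u ⬝ᵥ M *ᵥ v = v ⬝ᵥ Mᵀ *ᵥ u := by
  rw [dotProduct_mulVec, mulVec_transpose, dotProduct_comm]

lemma sym_dot {d : ℕ} (M : Matrix (Fin d) (Fin d) ℝ) (h : Mᵀ = M) (u v : Fin d → ℝ) :
    v ⬝ᵥ M *ᵥ u = u ⬝ᵥ M *ᵥ v := by
  rw [swap_dot M v u, h]

lemma skew_dot {d : ℕ} (M : Matrix (Fin d) (Fin d) ℝ) (h : Mᵀ = -M) (u : Fin d → ℝ) :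
    u ⬝ᵥ M *ᵥ u = 0 := by
  have h2 := swap_dot M u u
  rw [h, Matrix.neg_mulVec, dotProduct_neg] at h2
  linarith

lemma dot_sum {d : ℕ} {ι : Type*} [Fintype ι] (v : Fin d → ℝ) (f : ι → (Fin d → ℝ)) :
    v ⬝ᵥ (∑ j : ι, f j) = ∑ j : ι, v ⬝ᵥ f j := by
  simp only [dotProduct, Finset.sum_apply, Finset.mul_sum]
  exact Finset.sum_comm

lemma sum_dot {d : ℕ} {ι : Type*} [Fintype ι] (v : Fin d → ℝ) (f : ι → (Fin d → ℝ)) :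
    (∑ j : ι, f j) ⬝ᵥ v = ∑ j : ι, f j ⬝ᵥ v := by
  simp only [dotProduct, Finset.sum_apply, Finset.sum_mul]
  exact Finset.sum_comm

lemma mulVec_sum'_s7 {d : ℕ} {ι : Type*} [Fintype ι] (M : Matrix (Fin d) (Fin d) ℝ)
    (f : ι → (Fin d → ℝ)) :
    M *ᵥ (∑ j : ι, f j) = ∑ j : ι, M *ᵥ f j := by
  funext i
  simp only [mulVec, dotProduct, Finset.sum_apply, Finset.mul_sum]
  exact Finset.sum_comm

/-- The key polarization identity: for a unit vector `x` and `y ⊥ x`,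
`q_X(x)|y|² − q_X(y) = ∑ i 2 (xᵀ Y_i y)(xᵀ B_i y)`. -/
lemma key_id {d r : ℕ} (X : Matrix (Fin d) (Fin d) ℝ)
    (Y B : Fin r → Matrix (Fin d) (Fin d) ℝ)
    (hX : Xᵀ = X) (hY : ∀ i, (Y i)ᵀ = Y i) (hB : ∀ i, (B i)ᵀ = -(B i))
    (hid : ∀ u v : Fin d → ℝ,
      (u ⬝ᵥ X.mulVec u) * (u ⬝ᵥ v) - (u ⬝ᵥ u) * (u ⬝ᵥ X.mulVec v)
        = ∑ i : Fin r, (u ⬝ᵥ (Y i).mulVec u) * (u ⬝ᵥ (B i).mulVec v))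
    (x y : Fin d → ℝ) (hx : x ⬝ᵥ x = 1) (hxy : x ⬝ᵥ y = 0) :
    (x ⬝ᵥ X *ᵥ x) * (y ⬝ᵥ y) - y ⬝ᵥ X *ᵥ y
      = ∑ i : Fin r, 2 * (x ⬝ᵥ (Y i) *ᵥ y) * (x ⬝ᵥ (B i) *ᵥ y) := by
  have hyx : y ⬝ᵥ x = 0 := by rw [dotProduct_comm]; exact hxy
  have H : ∀ t : ℝ,
      ((x ⬝ᵥ X *ᵥ x) + 2*t*(x ⬝ᵥ X *ᵥ y) + t^2*(y ⬝ᵥ X *ᵥ y)) * (t * (y ⬝ᵥ y))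
        - (1 + t^2*(y ⬝ᵥ y)) * ((x ⬝ᵥ X *ᵥ y) + t*(y ⬝ᵥ X *ᵥ y))
      = (∑ i : Fin r, (x ⬝ᵥ (Y i) *ᵥ x) * (x ⬝ᵥ (B i) *ᵥ y))
        + t * (∑ i : Fin r, 2 * (x ⬝ᵥ (Y i) *ᵥ y) * (x ⬝ᵥ (B i) *ᵥ y))
        + t^2 * (∑ i : Fin r, (y ⬝ᵥ (Y i) *ᵥ y) * (x ⬝ᵥ (B i) *ᵥ y)) := by
    intro t
    have h := hid (x + t • y) y
    have e1 : (x + t • y) ⬝ᵥ X *ᵥ (x + t • y)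
        = (x ⬝ᵥ X *ᵥ x) + 2*t*(x ⬝ᵥ X *ᵥ y) + t^2*(y ⬝ᵥ X *ᵥ y) := by
      simp only [mulVec_add, mulVec_smul, add_dotProduct, smul_dotProduct,
        dotProduct_add, dotProduct_smul, smul_eq_mul, sym_dot X hX x y]
      ring
    have e2 : (x + t • y) ⬝ᵥ y = t * (y ⬝ᵥ y) := by
      simp only [add_dotProduct, smul_dotProduct, smul_eq_mul, hxy, zero_add]
    have e3 : (x + t • y) ⬝ᵥ (x + t • y) = 1 + t^2*(y ⬝ᵥ y) := by
      simp only [mulVec_add, mulVec_smul, add_dotProduct, smul_dotProduct,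
        dotProduct_add, dotProduct_smul, smul_eq_mul, hx, hxy, hyx]
      ring
    have e4 : (x + t • y) ⬝ᵥ X *ᵥ y = (x ⬝ᵥ X *ᵥ y) + t*(y ⬝ᵥ X *ᵥ y) := by
      simp only [add_dotProduct, smul_dotProduct, smul_eq_mul]
    have e5 : ∀ i, ((x + t • y) ⬝ᵥ (Y i) *ᵥ (x + t • y)) * ((x + t • y) ⬝ᵥ (B i) *ᵥ y)
        = (x ⬝ᵥ (Y i) *ᵥ x) * (x ⬝ᵥ (B i) *ᵥ y)
          + t * (2 * (x ⬝ᵥ (Y i) *ᵥ y) * (x ⬝ᵥ (B i) *ᵥ y))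
          + t^2 * ((y ⬝ᵥ (Y i) *ᵥ y) * (x ⬝ᵥ (B i) *ᵥ y)) := by
      intro i
      have sY : y ⬝ᵥ (Y i) *ᵥ x = x ⬝ᵥ (Y i) *ᵥ y := sym_dot (Y i) (hY i) x y
      have sB : y ⬝ᵥ (B i) *ᵥ y = 0 := skew_dot (B i) (hB i) y
      simp only [mulVec_add, mulVec_smul, add_dotProduct, smul_dotProduct,
        dotProduct_add, dotProduct_smul, smul_eq_mul, sY, sB]
      ring
    rw [e1, e2, e3, e4] at h
    rw [h, Finset.sum_congr rfl (fun i _ => e5 i), Finset.sum_add_distrib,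
      Finset.sum_add_distrib, ← Finset.mul_sum, ← Finset.mul_sum]
  have h1 := H 1
  have h2 := H (-1)
  linarith

/-- The dimension-counting lemma: the number of "eigendirections" of `X` with eigenvalue
strictly smaller than `xᵀXx` (for a unit eigenvector-like `x` orthogonal to them) is at most
the number of non-scalar `Y i`. -/
lemma count_le {d r : ℕ} (X : Matrix (Fin d) (Fin d) ℝ)
    (Y B : Fin r → Matrix (Fin d) (Fin d) ℝ)
    (hX : Xᵀ = X) (hY : ∀ i, (Y i)ᵀ = Y i) (hB : ∀ i, (B i)ᵀ = -(B i))
    (hid : ∀ u v : Fin d → ℝ,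
      (u ⬝ᵥ X.mulVec u) * (u ⬝ᵥ v) - (u ⬝ᵥ u) * (u ⬝ᵥ X.mulVec v)
        = ∑ i : Fin r, (u ⬝ᵥ (Y i).mulVec u) * (u ⬝ᵥ (B i).mulVec v))
    (x : Fin d → ℝ) (hx : x ⬝ᵥ x = 1)
    (μ : Fin d → ℝ) (e : Fin d → (Fin d → ℝ))
    (T : Finset (Fin d))
    (hxe : ∀ j ∈ T, x ⬝ᵥ e j = 0)
    (he : ∀ j k, j ∈ T → k ∈ T → (e j ⬝ᵥ e k = if j = k then 1 else 0))
    (heig : ∀ j ∈ T, X *ᵥ e j = μ j • e j)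
    (hlt : ∀ j ∈ T, μ j < x ⬝ᵥ X *ᵥ x) :
    T.card ≤ {i : Fin r | ¬ ∃ c : ℝ, Y i = c • (1 : Matrix (Fin d) (Fin d) ℝ)}.ncard := by
  classical
  set S : Set (Fin r) := {i : Fin r | ¬ ∃ c : ℝ, Y i = c • (1 : Matrix (Fin d) (Fin d) ℝ)}
    with hS
  have hfin : S.Finite := Set.toFinite _
  by_contra hcon
  push_neg at hcon
  -- the linear map collecting the kernel conditions
  let L : (↥T → ℝ) →ₗ[ℝ] (↥hfin.toFinset → ℝ) :=
    { toFun := fun a i => x ⬝ᵥ ((Y i.1 + B i.1) *ᵥ (∑ j : ↥T, a j • e j.1))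
      map_add' := by
        intro a b
        funext i
        simp only [Pi.add_apply, add_smul, Finset.sum_add_distrib, mulVec_add,
          dotProduct_add]
      map_smul' := by
        intro t a
        funext i
        simp only [Pi.smul_apply, smul_eq_mul, RingHom.id_apply]
        rw [show (∑ j : ↥T, (t * a j) • e j.1) = t • (∑ j : ↥T, a j • e j.1) by
          rw [Finset.smul_sum]
          exact Finset.sum_congr rfl fun j _ => (smul_smul t (a j) (e j.1)).symm]
        rw [mulVec_smul, dotProduct_smul, smul_eq_mul] }
  have hnotinj : ¬ Function.Injective L := by
    intro hinj
    have h1 := LinearMap.finrank_le_finrank_of_injective hinj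
    rw [Module.finrank_fintype_fun_eq_card, Module.finrank_fintype_fun_eq_card,
      Fintype.card_coe, Fintype.card_coe] at h1
    rw [Set.ncard_eq_toFinset_card S hfin] at hcon
    omega
  rw [Function.not_injective_iff] at hnotinj
  obtain ⟨a, b, hab, hne⟩ := hnotinj
  set c : ↥T → ℝ := a - b with hc
  have hc0 : c ≠ 0 := sub_ne_zero.2 hne
  have hLc : L c = 0 := by rw [hc, map_sub, hab, sub_self]
  set y : Fin d → ℝ := ∑ j : ↥T, c j • e j.1 with hy
  -- basic computations
  have hxy : x ⬝ᵥ y = 0 := by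
    rw [hy, dot_sum]
    refine Finset.sum_eq_zero fun j _ => ?_
    rw [dotProduct_smul, smul_eq_mul, hxe j.1 j.2, mul_zero]
  have dcomp : ∀ j : ↥T, e j.1 ⬝ᵥ y = c j := by
    intro j
    rw [hy, dot_sum]
    have hterm : ∀ k : ↥T, e j.1 ⬝ᵥ c k • e k.1 = if j = k then c k else 0 := by
      intro k
      rw [dotProduct_smul, smul_eq_mul, he j.1 k.1 j.2 k.2]
      by_cases h : j = k
      · simp [h]
      · have : ¬ (j.1 = k.1) := fun hh => h (Subtype.ext hh)
        simp [h, this]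
    rw [Finset.sum_congr rfl fun k _ => hterm k,
      Finset.sum_ite_eq Finset.univ j (fun k => c k)]
    simp
  have hyy : y ⬝ᵥ y = ∑ j : ↥T, c j ^ 2 := by
    rw [hy, sum_dot]
    refine Finset.sum_congr rfl fun j _ => ?_
    rw [smul_dotProduct, smul_eq_mul, ← hy, dcomp j]
    ring
  have hqy : y ⬝ᵥ X *ᵥ y = ∑ j : ↥T, μ j.1 * c j ^ 2 := by
    have hXy : X *ᵥ y = ∑ j : ↥T, (c j * μ j.1) • e j.1 := by
      rw [hy, mulVec_sum'_s7]
      refine Finset.sum_congr rfl fun j _ => ?_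
      rw [mulVec_smul, heig j.1 j.2, smul_smul]
    rw [hXy, dot_sum]
    refine Finset.sum_congr rfl fun j _ => ?_
    rw [dotProduct_smul, smul_eq_mul, dotProduct_comm, dcomp j]
    ring
  -- strict inequality from the eigenvalue bound
  obtain ⟨j0, hj0⟩ := Function.ne_iff.1 hc0
  have hj0' : c j0 ≠ 0 := by simpa using hj0
  have hstrict : y ⬝ᵥ X *ᵥ y < (x ⬝ᵥ X *ᵥ x) * (y ⬝ᵥ y) := by
    rw [hqy, hyy, Finset.mul_sum]
    refine Finset.sum_lt_sum (fun j _ => ?_) ⟨j0, Finset.mem_univ _, ?_⟩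
    · exact mul_le_mul_of_nonneg_right (le_of_lt (hlt j.1 j.2)) (sq_nonneg _)
    · have hp : 0 < c j0 ^ 2 := by positivity
      exact mul_lt_mul_of_pos_right (hlt j0.1 j0.2) hp
  -- kernel conditions
  have hker : ∀ i, i ∈ S → x ⬝ᵥ (Y i) *ᵥ y + x ⬝ᵥ (B i) *ᵥ y = 0 := by
    intro i hi
    have h2 := congrFun hLc ⟨i, hfin.mem_toFinset.2 hi⟩
    simp only [L, LinearMap.coe_mk, AddHom.coe_mk, Pi.zero_apply, ← hy] at h2
    rw [add_mulVec, dotProduct_add] at h2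
    exact h2
  -- contradiction via the key identity
  have hkey := key_id X Y B hX hY hB hid x y hx hxy
  have hsum : (∑ i : Fin r, 2 * (x ⬝ᵥ (Y i) *ᵥ y) * (x ⬝ᵥ (B i) *ᵥ y)) ≤ 0 := by
    refine Finset.sum_nonpos fun i _ => ?_
    by_cases hi : ∃ cc : ℝ, Y i = cc • (1 : Matrix (Fin d) (Fin d) ℝ)
    · obtain ⟨cc, hcc⟩ := hi
      have hz : x ⬝ᵥ (Y i) *ᵥ y = 0 := by
        rw [hcc, smul_mulVec, one_mulVec, dotProduct_smul, smul_eq_mul, hxy, mul_zero]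
      rw [hz]; ring_nf; exact le_refl 0
    · have h0 := hker i hi
      have hb : x ⬝ᵥ (B i) *ᵥ y = -(x ⬝ᵥ (Y i) *ᵥ y) := by linarith
      rw [hb]
      nlinarith [sq_nonneg (x ⬝ᵥ (Y i) *ᵥ y)]
  linarith

end Auxiliary

/-- Lemma 5.3: if `(uᵀXu)(u,v) − (u,u)(uᵀXv) = ∑ i (uᵀY_i u)(uᵀB_i v)` with
`X, Y_i` symmetric, `B_i` skew-symmetric, and `d > 2s` where `s` is the number of
non-scalar `Y_i`, then `X` is scalar and both sides vanish identically. -/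
theorem scalar_matrix_of_identity (d r : ℕ)
    (X : Matrix (Fin d) (Fin d) ℝ)
    (Y B : Fin r → Matrix (Fin d) (Fin d) ℝ)
    (hX : Xᵀ = X)
    (hY : ∀ i, (Y i)ᵀ = Y i)
    (hB : ∀ i, (B i)ᵀ = -(B i))
    (hid : ∀ u v : Fin d → ℝ,
      (u ⬝ᵥ X.mulVec u) * (u ⬝ᵥ v) - (u ⬝ᵥ u) * (u ⬝ᵥ X.mulVec v)
        = ∑ i : Fin r, (u ⬝ᵥ (Y i).mulVec u) * (u ⬝ᵥ (B i).mulVec v))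
    (hcard : 2 * ({i : Fin r | ¬ ∃ c : ℝ, Y i = c • (1 : Matrix (Fin d) (Fin d) ℝ)}.ncard) < d) :
    (∃ c : ℝ, X = c • (1 : Matrix (Fin d) (Fin d) ℝ)) ∧
    (∀ u v : Fin d → ℝ,
      (u ⬝ᵥ X.mulVec u) * (u ⬝ᵥ v) - (u ⬝ᵥ u) * (u ⬝ᵥ X.mulVec v) = 0) := by
  classical
  have hd : 0 < d := lt_of_le_of_lt (Nat.zero_le _) hcard
  -- spectral decomposition
  have hherm : X.IsHermitian := by
    rw [Matrix.IsHermitian, conjTranspose_eq_transpose_of_trivial]; exact hX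
  set e : Fin d → (Fin d → ℝ) := fun j => (hherm.eigenvectorBasis j : EuclideanSpace ℝ (Fin d))
    with he_def
  set μ : Fin d → ℝ := hherm.eigenvalues with hμ_def
  have he : ∀ j k, e j ⬝ᵥ e k = if j = k then (1:ℝ) else 0 := by
    intro j k
    have h1 := orthonormal_iff_ite.mp hherm.eigenvectorBasis.orthonormal j k
    rw [← h1]
    simp [PiLp.inner_apply, dotProduct, e]
    exact Finset.sum_congr rfl fun _ _ => mul_comm _ _
  have hnorm : ∀ j, e j ⬝ᵥ e j = 1 := by intro j; rw [he]; simp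
  have heig : ∀ j, X *ᵥ e j = μ j • e j := fun j => hherm.mulVec_eigenvectorBasis j
  have hq : ∀ j, e j ⬝ᵥ X *ᵥ e j = μ j := by
    intro j
    rw [heig j, dotProduct_smul, smul_eq_mul, hnorm j, mul_one]
  -- negated data
  have hX' : (-X)ᵀ = -X := by rw [transpose_neg, hX]
  have hB' : ∀ i, (-(B i))ᵀ = -(-(B i)) := by
    intro i; rw [transpose_neg, hB i]
  have hid' : ∀ u v : Fin d → ℝ,
      (u ⬝ᵥ (-X).mulVec u) * (u ⬝ᵥ v) - (u ⬝ᵥ u) * (u ⬝ᵥ (-X).mulVec v)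
        = ∑ i : Fin r, (u ⬝ᵥ (Y i).mulVec u) * (u ⬝ᵥ (-(B i)).mulVec v) := by
    intro u v
    simp only [Matrix.neg_mulVec, dotProduct_neg, mul_neg, neg_mul, Finset.sum_neg_distrib]
    linarith [hid u v]
  -- extremal eigenvalues
  obtain ⟨j0, -, hj0⟩ := Finset.exists_max_image Finset.univ μ ⟨⟨0, hd⟩, Finset.mem_univ _⟩
  obtain ⟨j1, -, hj1⟩ := Finset.exists_min_image Finset.univ μ ⟨⟨0, hd⟩, Finset.mem_univ _⟩
  set T : Finset (Fin d) := Finset.univ.filter (fun j => μ j < μ j0) with hT_def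
  set T' : Finset (Fin d) := Finset.univ.filter (fun j => μ j1 < μ j) with hT'_def
  have hT : T.card ≤ ({i : Fin r | ¬ ∃ c : ℝ,
      Y i = c • (1 : Matrix (Fin d) (Fin d) ℝ)}.ncard) := by
    refine count_le X Y B hX hY hB hid (e j0) (hnorm j0) μ e T ?_ ?_ ?_ ?_
    · intro j hj
      have hjmem : μ j < μ j0 := (Finset.mem_filter.1 hj).2
      have hne : j0 ≠ j := fun hh => by rw [hh] at hjmem; exact lt_irrefl _ hjmem
      rw [he j0 j, if_neg hne]
    · intro j k _ _; exact he j k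
    · intro j _; exact heig j
    · intro j hj
      rw [hq j0]
      exact (Finset.mem_filter.1 hj).2
  have hT' : T'.card ≤ ({i : Fin r | ¬ ∃ c : ℝ,
      Y i = c • (1 : Matrix (Fin d) (Fin d) ℝ)}.ncard) := by
    refine count_le (-X) Y (fun i => -(B i)) hX' hY hB' hid' (e j1) (hnorm j1)
      (fun j => -(μ j)) e T' ?_ ?_ ?_ ?_
    · intro j hj
      have hjmem : μ j1 < μ j := (Finset.mem_filter.1 hj).2
      have hne : j1 ≠ j := fun hh => by rw [hh] at hjmem; exact lt_irrefl _ hjmem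
      rw [he j1 j, if_neg hne]
    · intro j k _ _; exact he j k
    · intro j _
      rw [Matrix.neg_mulVec, heig j, neg_smul]
    · intro j hj
      rw [Matrix.neg_mulVec, dotProduct_neg, hq j1, neg_lt_neg_iff]
      exact (Finset.mem_filter.1 hj).2
  -- conclude eigenvalues are constant
  have hminmax : μ j1 = μ j0 := by
    by_contra hne
    have hlt : μ j1 < μ j0 :=
      lt_of_le_of_ne (hj1 j0 (Finset.mem_univ _)) hne
    have hcover : (Finset.univ : Finset (Fin d)) ⊆ T ∪ T' := by
      intro j _
      rw [Finset.mem_union, hT_def, hT'_def, Finset.mem_filter, Finset.mem_filter]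
      rcases lt_or_eq_of_le (hj0 j (Finset.mem_univ _)) with h | h
      · exact Or.inl ⟨Finset.mem_univ _, h⟩
      · exact Or.inr ⟨Finset.mem_univ _, by rw [h]; exact hlt⟩
    have hcard2 : d ≤ T.card + T'.card := by
      calc d = (Finset.univ : Finset (Fin d)).card := by simp
        _ ≤ (T ∪ T').card := Finset.card_le_card hcover
        _ ≤ T.card + T'.card := Finset.card_union_le _ _
    omega
  have hconst : ∀ j, μ j = μ j0 :=
    fun j => le_antisymm (hj0 j (Finset.mem_univ _))
      (hminmax ▸ hj1 j (Finset.mem_univ _))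
  -- X is scalar
  have hXscal : X = (μ j0) • (1 : Matrix (Fin d) (Fin d) ℝ) := by
    have hs := hherm.spectral_theorem
    have hfun : (RCLike.ofReal ∘ hherm.eigenvalues : Fin d → ℝ) = fun _ => μ j0 :=
      funext fun j => by simp [← hμ_def, hconst j]
    rw [hfun, ← smul_one_eq_diagonal] at hs
    rw [hs, map_smul, map_one]
  refine ⟨⟨μ j0, hXscal⟩, ?_⟩
  intro u v
  rw [hXscal]
  simp only [Matrix.smul_mulVec, Matrix.one_mulVec, dotProduct_smul, smul_eq_mul]
  ring
end

section
/- Suppose p ≥ 2 and S_1,...,S_{p+q} are real symmetric m×m matrices satisfying the Clifford relations. Then after conjugating all S_i by a common orthogonal matrix, one may assume S_1 = diag(1_d, −1_d) with d = m/2, S_i = [[0, B_i],[B_iᵀ, 0]] for 2 ≤ i ≤ p with B_2 = 1_d and B_i orthogonal and skew-symmetric for 3 ≤ i ≤ p, and S_{p+j} = [[A_j, 0],[0, A_j]] for 1 ≤ j ≤ q, where A_1,...,A_q are symmetric, A_j^2 = 1_d, A_iA_j = −A_jA_i for i ≠ j, B_iB_j = −B_jB_i for 3 ≤ i < j ≤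 p, and A_iB_j = B_jA_i. -/
open Matrix BigOperators

open Matrix RealInnerProductSpace Module

namespace CliffordAux

variable {m : ℕ}

/-- eigenspace of `T` for eigenvalue `1`, as a submodule of Euclidean space -/
noncomputable def posSpace (T : Matrix (Fin m) (Fin m) ℝ) :
    Submodule ℝ (EuclideanSpace ℝ (Fin m)) where
  carrier := {x | T.mulVec x = x}
  add_mem' := by
    intro a b ha hb
    simp only [Set.mem_setOf_eq, WithLp.ofLp_add] at *
    rw [Matrix.mulVec_add, ha, hb]
  zero_mem' := by simp only [Set.mem_setOf_eq, WithLp.ofLp_zero, Matrix.mulVec_zero]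
  smul_mem' := by
    intro r a ha
    simp only [Set.mem_setOf_eq, WithLp.ofLp_smul] at *
    rw [Matrix.mulVec_smul, ha]

noncomputable def negSpace (T : Matrix (Fin m) (Fin m) ℝ) :
    Submodule ℝ (EuclideanSpace ℝ (Fin m)) where
  carrier := {x | T.mulVec x = -x}
  add_mem' := by
    intro a b ha hb
    simp only [Set.mem_setOf_eq, WithLp.ofLp_add] at *
    rw [Matrix.mulVec_add, ha, hb, neg_add]
  zero_mem' := by simp only [Set.mem_setOf_eq, WithLp.ofLp_zero, Matrix.mulVec_zero, neg_zero]
  smul_mem' := by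
    intro r a ha
    simp only [Set.mem_setOf_eq, WithLp.ofLp_smul] at *
    rw [Matrix.mulVec_smul, ha, smul_neg]

lemma mem_posSpace {T : Matrix (Fin m) (Fin m) ℝ} {x : EuclideanSpace ℝ (Fin m)} :
    x ∈ posSpace T ↔ T.mulVec x = x := Iff.rfl

lemma mem_negSpace {T : Matrix (Fin m) (Fin m) ℝ} {x : EuclideanSpace ℝ (Fin m)} :
    x ∈ negSpace T ↔ T.mulVec x = -x := Iff.rfl

/-- symmetric matrix shuffle for dotProduct -/
lemma symm_shuffle (M : Matrix (Fin m) (Fin m) ℝ) (hM : Mᵀ = M) (x y : Fin m → ℝ) :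
    x ⬝ᵥ M.mulVec y = M.mulVec x ⬝ᵥ y := by
  rw [Matrix.dotProduct_mulVec, ← Matrix.mulVec_transpose, hM]

lemma orth_pos_neg (T : Matrix (Fin m) (Fin m) ℝ) (hTs : Tᵀ = T)
    (x y : Fin m → ℝ) (hx : T.mulVec x = x) (hy : T.mulVec y = -y) :
    x ⬝ᵥ y = 0 := by
  have h1 : x ⬝ᵥ y = -(x ⬝ᵥ y) := by
    conv_lhs => rw [← hx, ← symm_shuffle T hTs, hy, dotProduct_neg]
  linarith

lemma core (m : ℕ) (T R : Matrix (Fin m) (Fin m) ℝ)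
    (hTs : Tᵀ = T) (hT2 : T * T = 1) (hRs : Rᵀ = R) (hR2 : R * R = 1)
    (hTR : T * R = -(R * T)) :
    ∃ d : ℕ, m = 2 * d ∧ ∃ w : Fin d ⊕ Fin d → EuclideanSpace ℝ (Fin m),
      (∀ a b, (w a : Fin m → ℝ) ⬝ᵥ (w b : Fin m → ℝ) = if a = b then 1 else 0) ∧
      (∀ k, T.mulVec (w (Sum.inl k)) = w (Sum.inl k)) ∧
      (∀ k, (w (Sum.inr k) : Fin m → ℝ) = R.mulVec (w (Sum.inl k))) := by
  classical
  have hT2' : ∀ x : Fin m → ℝ, T.mulVec (T.mulVec x) = x := by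
    intro x; rw [Matrix.mulVec_mulVec, hT2, Matrix.one_mulVec]
  have hR2' : ∀ x : Fin m → ℝ, R.mulVec (R.mulVec x) = x := by
    intro x; rw [Matrix.mulVec_mulVec, hR2, Matrix.one_mulVec]
  have hTR' : ∀ x : Fin m → ℝ, T.mulVec (R.mulVec x) = -(R.mulVec (T.mulVec x)) := by
    intro x
    rw [Matrix.mulVec_mulVec, hTR, Matrix.neg_mulVec, Matrix.mulVec_mulVec]
  -- R maps posSpace into negSpace and back
  have hRmap : ∀ x : EuclideanSpace ℝ (Fin m), x ∈ posSpace T → WithLp.toLp 2 (R.mulVec x) ∈ negSpace T := by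
    intro x hx
    rw [mem_negSpace, WithLp.ofLp_toLp, hTR', mem_posSpace.mp hx]
  have hRmap' : ∀ x : EuclideanSpace ℝ (Fin m), x ∈ negSpace T → WithLp.toLp 2 (R.mulVec x) ∈ posSpace T := by
    intro x hx
    rw [mem_posSpace, WithLp.ofLp_toLp, hTR', mem_negSpace.mp hx, Matrix.mulVec_neg, neg_neg]
  -- linear equivalence between posSpace and negSpace
  let φ : posSpace T →ₗ[ℝ] negSpace T :=
    ((Matrix.toEuclideanLin R).comp (posSpace T).subtype).codRestrict (negSpace T)
      (fun x => hRmap x x.2)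
  let ψ : negSpace T →ₗ[ℝ] posSpace T :=
    ((Matrix.toEuclideanLin R).comp (negSpace T).subtype).codRestrict (posSpace T)
      (fun x => hRmap' x x.2)
  have hφψ : φ.comp ψ = LinearMap.id := by
    ext x
    exact congrFun (hR2' x) _
  have hψφ : ψ.comp φ = LinearMap.id := by
    ext x
    exact congrFun (hR2' x) _
  have hrank : finrank ℝ (negSpace T) = finrank ℝ (posSpace T) :=
    (LinearEquiv.ofLinear ψ φ hψφ hφψ).finrank_eq
  -- complementarity
  have hinf : posSpace T ⊓ negSpace T = ⊥ := by
    rw [Submodule.eq_bot_iff]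
    rintro x ⟨hx1, hx2⟩
    have h2 : (x : EuclideanSpace ℝ (Fin m)) = -x := by
      have h2' := mem_negSpace.mp hx2
      rw [mem_posSpace.mp hx1] at h2'
      exact WithLp.ofLp_injective 2 h2'
    have h3 : (2 : ℝ) • x = 0 := by
      rw [two_smul]
      nth_rewrite 2 [h2]
      exact add_neg_cancel x
    simpa using (smul_eq_zero.mp h3).resolve_left (by norm_num)
  have hsup : posSpace T ⊔ negSpace T = ⊤ := by
    rw [eq_top_iff]
    rintro x -
    set y : EuclideanSpace ℝ (Fin m) := Matrix.toEuclideanLin T x with hy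
    have hyx : T.mulVec x = y := rfl
    have hyy : T.mulVec y = x := hT2' x
    have h1 : ((2:ℝ)⁻¹ • (x + y) : EuclideanSpace ℝ (Fin m)) ∈ posSpace T := by
      rw [mem_posSpace, WithLp.ofLp_smul, WithLp.ofLp_add, Matrix.mulVec_smul, Matrix.mulVec_add, hyx, hyy, add_comm]
    have h2 : ((2:ℝ)⁻¹ • (x - y) : EuclideanSpace ℝ (Fin m)) ∈ negSpace T := by
      rw [mem_negSpace, WithLp.ofLp_smul, WithLp.ofLp_sub, Matrix.mulVec_smul, Matrix.mulVec_sub, hyx, hyy,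
        show y.ofLp - x.ofLp = -(x.ofLp - y.ofLp) from (neg_sub _ _).symm, smul_neg]
    have hxe : x = (2:ℝ)⁻¹ • (x + y) + (2:ℝ)⁻¹ • (x - y) := by module
    rw [hxe]
    exact Submodule.add_mem _ (Submodule.mem_sup_left h1) (Submodule.mem_sup_right h2)
  have hdims := Submodule.finrank_sup_add_finrank_inf_eq (posSpace T) (negSpace T)
  rw [hsup, hinf, finrank_top, finrank_bot, hrank, add_zero, finrank_euclideanSpace_fin] at hdims
  refine ⟨finrank ℝ (posSpace T), by omega, ?_⟩
  set d := finrank ℝ (posSpace T) with hd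
  let b : OrthonormalBasis (Fin d) ℝ (posSpace T) := stdOrthonormalBasis ℝ (posSpace T)
  let u : Fin d → EuclideanSpace ℝ (Fin m) := fun k => (b k : EuclideanSpace ℝ (Fin m))
  have hu : ∀ k, T.mulVec (u k) = u k := fun k => mem_posSpace.mp (b k).2
  have huRn : ∀ k, WithLp.toLp 2 (R.mulVec (u k)) ∈ negSpace T :=
    fun k => hRmap _ (b k).2
  have hRR : ∀ x y : Fin m → ℝ, R.mulVec x ⬝ᵥ R.mulVec y = x ⬝ᵥ y := by
    intro x y
    rw [← symm_shuffle R hRs, hR2']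
  have hdot : ∀ j k, u j ⬝ᵥ u k = if j = k then 1 else 0 := by
    intro j k
    have h := orthonormal_iff_ite.mp b.orthonormal j k
    rw [Submodule.coe_inner] at h
    rw [show (u j ⬝ᵥ u k) = ⟪(b j : EuclideanSpace ℝ (Fin m)), (b k : EuclideanSpace ℝ (Fin m))⟫ by
      simp [PiLp.inner_apply, dotProduct, RCLike.inner_apply, u, mul_comm]]
    rw [h]
  refine ⟨Sum.elim u (fun k => WithLp.toLp 2 (R.mulVec (u k))), ?_, fun k => hu k, fun k => rfl⟩
  rintro (a | a) (b' | b')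
  · simp only [Sum.elim_inl, Sum.inl.injEq]
    rw [hdot]
  · simp only [Sum.elim_inl, Sum.elim_inr]
    rw [orth_pos_neg T hTs _ _ (hu a) (mem_negSpace.mp (huRn b'))]
    simp
  · simp only [Sum.elim_inl, Sum.elim_inr]
    rw [dotProduct_comm, orth_pos_neg T hTs _ _ (hu b') (mem_negSpace.mp (huRn a))]
    simp
  · simp only [Sum.elim_inr, Sum.inr.injEq, WithLp.ofLp_toLp]
    rw [hRR, hdot]

end CliffordAux

/-- Lemma 2.9, canonical form: for `p ≥ 2`, after an orthogonal change of
basis the basis matrices take the block form `S_1 = diag(1_d, −1_d)`,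
`S_i = [[0,B_i],[B_iᵀ,0]]` (`2 ≤ i ≤ p`, `B_2 = 1`, `B_i` orthogonal skew-symmetric for
`i ≥ 3`), `S_{p+j} = diag(A_j, A_j)`, with the stated relations among the `A`'s and `B`'s. -/
theorem clifford_canonical_form (p q m : ℕ) (hp : 2 ≤ p)
    (S : Fin (p + q) → Matrix (Fin m) (Fin m) ℝ)
    (hsym : ∀ i, (S i)ᵀ = S i)
    (hsq : ∀ i, S i * S i = 1)
    (hcomm : ∀ i j : Fin (p + q),
      (((i : ℕ) < p ∧ p ≤ (j : ℕ)) ∨ (p ≤ (i : ℕ) ∧ (j : ℕ) < p)) →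
      S i * S j = S j * S i)
    (hanti : ∀ i j : Fin (p + q), i ≠ j →
      (((i : ℕ) < p ∧ (j : ℕ) < p) ∨ (p ≤ (i : ℕ) ∧ p ≤ (j : ℕ))) →
      S i * S j = -(S j * S i)) :
    ∃ (d : ℕ) (_ : m = 2 * d) (e : Fin m ≃ (Fin d ⊕ Fin d))
      (U : Matrix (Fin m) (Fin m) ℝ)
      (A : Fin q → Matrix (Fin d) (Fin d) ℝ)
      (B : Fin p → Matrix (Fin d) (Fin d) ℝ),
      Uᵀ * U = 1 ∧
      (∀ i : Fin (p + q), (i : ℕ) = 0 →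
        (U * S i * Uᵀ).submatrix e.symm e.symm
          = Matrix.fromBlocks 1 0 0 (-1)) ∧
      (∀ (i : Fin (p + q)) (h2 : (i : ℕ) < p), 1 ≤ (i : ℕ) →
        (U * S i * Uᵀ).submatrix e.symm e.symm
          = Matrix.fromBlocks 0 (B ⟨(i : ℕ), h2⟩) (B ⟨(i : ℕ), h2⟩)ᵀ 0) ∧
      (∀ (i : Fin (p + q)) (h : p ≤ (i : ℕ)),
        (U * S i * Uᵀ).submatrix e.symm e.symm
          = Matrix.fromBlocks (A ⟨(i : ℕ) - p, by have := i.isLt; omega⟩) 0 0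
              (A ⟨(i : ℕ) - p, by have := i.isLt; omega⟩)) ∧
      B ⟨1, by omega⟩ = 1 ∧
      (∀ j : Fin p, 2 ≤ (j : ℕ) → (B j)ᵀ = -(B j) ∧ (B j)ᵀ * B j = 1) ∧
      (∀ j : Fin q, (A j)ᵀ = A j ∧ A j * A j = 1) ∧
      (∀ j k : Fin q, j ≠ k → A j * A k = -(A k * A j)) ∧
      (∀ j k : Fin p, 2 ≤ (j : ℕ) → 2 ≤ (k : ℕ) → j ≠ k → B j * B k = -(B k * B j)) ∧
      (∀ (j : Fin q) (k : Fin p), 2 ≤ (k : ℕ) → A j * B k = B k * A j) := by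
  classical
  have hn0 : 0 < p + q := by omega
  have hn1 : 1 < p + q := by omega
  set i0 : Fin (p + q) := ⟨0, hn0⟩ with hi0
  set i1 : Fin (p + q) := ⟨1, hn1⟩ with hi1
  have hne01 : i0 ≠ i1 := by simp [hi0, hi1, Fin.ext_iff]
  have hTR : S i0 * S i1 = -(S i1 * S i0) :=
    hanti i0 i1 hne01 (Or.inl ⟨by simp [hi0]; omega, by simp [hi1]; omega⟩)
  obtain ⟨d, hm, w, hWo, hWT, hWR⟩ :=
    CliffordAux.core m (S i0) (S i1) (hsym i0) (hsq i0) (hsym i1) (hsq i1) hTR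
  let e : Fin m ≃ (Fin d ⊕ Fin d) :=
    (finCongr (by omega : m = d + d)).trans finSumFinEquiv.symm
  let U : Matrix (Fin m) (Fin m) ℝ := Matrix.of fun x y => w (e x) y
  -- orthogonality of U
  have hUUt : U * Uᵀ = 1 := by
    ext x y
    have h2 : (∑ j, U x j * U y j) = if e x = e y then 1 else 0 := hWo (e x) (e y)
    rw [Matrix.mul_apply]
    simp only [Matrix.transpose_apply]
    rw [h2, Matrix.one_apply]
    simp [Equiv.apply_eq_iff_eq]
  have hUtU : Uᵀ * U = 1 := mul_eq_one_comm.mp hUUt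
  -- the conjugated matrices
  let F : Fin (p + q) → Matrix (Fin d ⊕ Fin d) (Fin d ⊕ Fin d) ℝ :=
    fun i => (U * S i * Uᵀ).submatrix e.symm e.symm
  have hFdef : ∀ (i : Fin (p + q)) a b, F i a b = w a ⬝ᵥ (S i).mulVec (w b) := by
    intro i a b
    show ((U * S i * Uᵀ).submatrix e.symm e.symm) a b = _
    simp only [Matrix.submatrix_apply, Matrix.mul_apply, Matrix.transpose_apply,
      Matrix.of_apply, Equiv.apply_symm_apply, U, dotProduct, Matrix.mulVec,
      Finset.sum_mul, Finset.mul_sum]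
    rw [Finset.sum_comm]
    exact Finset.sum_congr rfl fun r _ => Finset.sum_congr rfl fun c _ => by ring
  -- symmetry of F entries
  have hFsym : ∀ (i : Fin (p + q)) a b, F i a b = F i b a := by
    intro i a b
    rw [hFdef, hFdef, CliffordAux.symm_shuffle _ (hsym i), dotProduct_comm]
  have hFtrans : ∀ i, (F i)ᵀ = F i := by
    intro i
    ext a b
    rw [Matrix.transpose_apply]
    exact hFsym i b a
  -- action of S i on the w's
  have hWT' : ∀ k, (S i0).mulVec (w (Sum.inr k)) = -(w (Sum.inr k)) := by
    intro k
    rw [hWR k, Matrix.mulVec_mulVec, hTR, Matrix.neg_mulVec, ← Matrix.mulVec_mulVec,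
      hWT k]
  -- maps between eigenspace predicates
  have hAntiMap : ∀ i : Fin (p + q), 1 ≤ (i : ℕ) → (i : ℕ) < p →
      ∀ x : Fin m → ℝ, (S i0).mulVec ((S i).mulVec x) = -((S i).mulVec ((S i0).mulVec x)) := by
    intro i h1 h2 x
    have h : S i0 * S i = -(S i * S i0) :=
      hanti i0 i (by simp [hi0, Fin.ext_iff]; omega) (Or.inl ⟨by simp [hi0]; omega, h2⟩)
    rw [Matrix.mulVec_mulVec, h, Matrix.neg_mulVec, ← Matrix.mulVec_mulVec]
  have hCommMap : ∀ i : Fin (p + q), p ≤ (i : ℕ) →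
      ∀ x : Fin m → ℝ, (S i0).mulVec ((S i).mulVec x) = (S i).mulVec ((S i0).mulVec x) := by
    intro i h x
    have hc : S i0 * S i = S i * S i0 := hcomm i0 i (Or.inl ⟨by simp [hi0]; omega, h⟩)
    rw [Matrix.mulVec_mulVec, hc, ← Matrix.mulVec_mulVec]
  -- block forms
  have hF0 : F i0 = Matrix.fromBlocks 1 0 0 (-1) := by
    ext a b
    rcases a with a | a <;> rcases b with b | b
    · rw [hFdef, hWT b, hWo]
      simp [Matrix.one_apply]
    · rw [hFdef, hWT' b, dotProduct_neg, hWo]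
      simp
    · rw [hFdef, hWT b, hWo]
      simp
    · rw [hFdef, hWT' b, dotProduct_neg, hWo]
      simp [Matrix.one_apply]
  have hFB : ∀ (i : Fin (p + q)), 1 ≤ (i : ℕ) → (i : ℕ) < p →
      F i = Matrix.fromBlocks 0 ((F i).toBlocks₁₂) ((F i).toBlocks₁₂)ᵀ 0 := by
    intro i h1 h2
    have hmap := hAntiMap i h1 h2
    ext a b
    rcases a with a | a <;> rcases b with b | b
    · rw [hFdef, CliffordAux.orth_pos_neg (S i0) (hsym i0) _ _ (hWT a)
        (by rw [hmap, hWT b])]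
      simp
    · simp [Matrix.toBlocks₁₂]
    · simp only [Matrix.fromBlocks_apply₂₁, Matrix.transpose_apply, Matrix.toBlocks₁₂,
        Matrix.of_apply]
      exact hFsym i (Sum.inr a) (Sum.inl b)
    · rw [hFdef, dotProduct_comm, CliffordAux.orth_pos_neg (S i0) (hsym i0) _ _
        (by rw [hmap, hWT' b, Matrix.mulVec_neg, neg_neg]) (hWT' a)]
      simp
  have hFA : ∀ (i : Fin (p + q)), p ≤ (i : ℕ) →
      F i = Matrix.fromBlocks ((F i).toBlocks₁₁) 0 0 ((F i).toBlocks₁₁) := by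
    intro i hpi
    have hmap := hCommMap i hpi
    have hc1 : S i1 * S i * S i1 = S i := by
      have h := hcomm i1 i (Or.inl ⟨by simp [hi1]; omega, hpi⟩)
      rw [h, Matrix.mul_assoc, hsq i1, Matrix.mul_one]
    ext a b
    rcases a with a | a <;> rcases b with b | b
    · simp [Matrix.toBlocks₁₁]
    · rw [hFdef, CliffordAux.orth_pos_neg (S i0) (hsym i0) _ _ (hWT a)
        (by rw [hmap, hWT' b, Matrix.mulVec_neg])]
      simp
    · rw [hFdef, dotProduct_comm, CliffordAux.orth_pos_neg (S i0) (hsym i0) _ _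
        (by rw [hmap, hWT b]) (hWT' a)]
      simp
    · simp only [Matrix.fromBlocks_apply₂₂, Matrix.toBlocks₁₁, Matrix.of_apply]
      rw [hFdef, hFdef, hWR a, hWR b, ← CliffordAux.symm_shuffle (S i1) (hsym i1),
        Matrix.mulVec_mulVec, Matrix.mulVec_mulVec, hc1]
  -- the blocks
  let B : Fin p → Matrix (Fin d) (Fin d) ℝ :=
    fun j => (F ⟨(j : ℕ), by omega⟩).toBlocks₁₂
  let A : Fin q → Matrix (Fin d) (Fin d) ℝ :=
    fun j => (F ⟨p + (j : ℕ), by omega⟩).toBlocks₁₁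
  have h1blk11 : (1 : Matrix (Fin d ⊕ Fin d) (Fin d ⊕ Fin d) ℝ).toBlocks₁₁ = 1 := by
    ext a b
    simp [Matrix.toBlocks₁₁, Matrix.one_apply]
  have h1blk22 : (1 : Matrix (Fin d ⊕ Fin d) (Fin d ⊕ Fin d) ℝ).toBlocks₂₂ = 1 := by
    ext a b
    simp [Matrix.toBlocks₂₂, Matrix.one_apply]
  -- multiplicativity of conjugation
  have hcancel : ∀ X : Matrix (Fin m) (Fin m) ℝ, Uᵀ * (U * X) = X := by
    intro X
    rw [← Matrix.mul_assoc, hUtU, Matrix.one_mul]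
  have hGmul : ∀ i j, F i * F j = (U * (S i * S j) * Uᵀ).submatrix e.symm e.symm := by
    intro i j
    show (U * S i * Uᵀ).submatrix e.symm e.symm * (U * S j * Uᵀ).submatrix e.symm e.symm = _
    rw [Matrix.submatrix_mul_equiv (U * S i * Uᵀ) (U * S j * Uᵀ) _ e.symm _]
    congr 1
    simp only [Matrix.mul_assoc]
    rw [hcancel]
  have hFscomm : ∀ i j, S i * S j = S j * S i → F i * F j = F j * F i := by
    intro i j h
    rw [hGmul, hGmul, h]
  have hFsanti : ∀ i j, S i * S j = -(S j * S i) → F i * F j = -(F j * F i) := by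
    intro i j h
    rw [hGmul i j, h, hGmul j i, Matrix.mul_neg, Matrix.neg_mul, Matrix.submatrix_neg]
    rfl
  have hFsq : ∀ i, F i * F i = 1 := by
    intro i
    rw [hGmul, hsq i, Matrix.mul_one, hUUt, Matrix.submatrix_one_equiv]
  -- specialized block forms
  have hFA' : ∀ j : Fin q, F ⟨p + (j : ℕ), by omega⟩ = Matrix.fromBlocks (A j) 0 0 (A j) :=
    fun j => hFA _ (by simp)
  have hFB' : ∀ (j : Fin p), 1 ≤ (j : ℕ) →
      F ⟨(j : ℕ), by omega⟩ = Matrix.fromBlocks 0 (B j) (B j)ᵀ 0 :=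
    fun j hj => hFB _ (by simpa using hj) (by simpa using j.isLt)
  -- B at index 1 equals 1
  have hB1 : B ⟨1, by omega⟩ = 1 := by
    ext a b
    show F i1 (Sum.inl a) (Sum.inr b) = _
    rw [hFdef, hWR b, Matrix.mulVec_mulVec, hsq i1, Matrix.one_mulVec, hWo]
    simp [Matrix.one_apply]
  have hFi1 : F i1 = Matrix.fromBlocks 0 1 1 0 := by
    have h := hFB' ⟨1, by omega⟩ (by simp)
    rw [hB1] at h
    rw [Matrix.transpose_one] at h
    exact h
  -- skew-symmetry of B j for j ≥ 2
  have hBskew : ∀ j : Fin p, 2 ≤ (j : ℕ) → (B j)ᵀ = -(B j) := by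
    intro j hj
    have hij : (⟨(j : ℕ), by omega⟩ : Fin (p + q)) ≠ i1 := by
      simp [hi1, Fin.ext_iff]; omega
    have h := hFsanti _ _ (hanti _ i1 hij
      (Or.inl ⟨by simpa using j.isLt, by simp [hi1]; omega⟩))
    rw [hFB' j (by omega), hFi1, Matrix.fromBlocks_multiply, Matrix.fromBlocks_multiply,
      Matrix.fromBlocks_neg] at h
    have h2 := congrArg Matrix.toBlocks₁₁ h
    simp only [Matrix.toBlocks_fromBlocks₁₁, Matrix.mul_zero, Matrix.zero_mul,
      Matrix.mul_one, Matrix.one_mul, add_zero, zero_add] at h2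
    exact (neg_eq_iff_eq_neg.mpr h2).symm
  -- assemble
  refine ⟨d, hm, e, U, A, B, hUtU, ?_, ?_, ?_, hB1, ?_, ?_, ?_, ?_, ?_⟩
  · intro i hi
    have : i = i0 := Fin.ext (by simpa [hi0] using hi)
    rw [this]
    exact hF0
  · intro i h2 h1
    exact hFB i h1 h2
  · intro i h
    have hieq : (⟨p + ((i : ℕ) - p), by omega⟩ : Fin (p + q)) = i := Fin.ext (by simp; omega)
    show F i = Matrix.fromBlocks (A ⟨(i : ℕ) - p, _⟩) 0 0 (A ⟨(i : ℕ) - p, _⟩)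
    have h3 : A ⟨(i : ℕ) - p, by omega⟩ = (F i).toBlocks₁₁ := by
      show (F ⟨p + ((i : ℕ) - p), by omega⟩).toBlocks₁₁ = _
      rw [congrArg F hieq]
    rw [h3]
    exact hFA i h
  · -- B j properties for j ≥ 2
    intro j hj
    refine ⟨hBskew j hj, ?_⟩
    have h := hFsq ⟨(j : ℕ), by omega⟩
    rw [hFB' j (by omega), Matrix.fromBlocks_multiply] at h
    have h2 := congrArg Matrix.toBlocks₂₂ h
    simpa [h1blk22] using h2
  · -- A j properties
    intro j
    constructor
    · have h := hFtrans ⟨p + (j : ℕ), by omega⟩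
      rw [hFA' j, Matrix.fromBlocks_transpose] at h
      have h2 := congrArg Matrix.toBlocks₁₁ h
      simpa using h2
    · have h := hFsq ⟨p + (j : ℕ), by omega⟩
      rw [hFA' j, Matrix.fromBlocks_multiply] at h
      have h2 := congrArg Matrix.toBlocks₁₁ h
      simpa [h1blk11] using h2
  · -- A anticommute
    intro j k hjk
    have hne : (⟨p + (j : ℕ), by omega⟩ : Fin (p + q)) ≠ ⟨p + (k : ℕ), by omega⟩ := by
      simp only [Fin.ext_iff, ne_eq]
      have : (j : ℕ) ≠ (k : ℕ) := fun h => hjk (Fin.ext h)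
      omega
    have h := hFsanti _ _ (hanti _ _ hne (Or.inr ⟨by simp, by simp⟩))
    rw [hFA' j, hFA' k, Matrix.fromBlocks_multiply, Matrix.fromBlocks_multiply,
      Matrix.fromBlocks_neg] at h
    have h2 := congrArg Matrix.toBlocks₁₁ h
    simpa using h2
  · -- B anticommute
    intro j k hj hk hjk
    have hne : (⟨(j : ℕ), by omega⟩ : Fin (p + q)) ≠ ⟨(k : ℕ), by omega⟩ := by
      simp only [Fin.ext_iff, ne_eq]
      exact fun h => hjk (Fin.ext h)
    have h := hFsanti _ _ (hanti _ _ hne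
      (Or.inl ⟨by simpa using j.isLt, by simpa using k.isLt⟩))
    rw [hFB' j (by omega), hFB' k (by omega), Matrix.fromBlocks_multiply,
      Matrix.fromBlocks_multiply, Matrix.fromBlocks_neg] at h
    have h2 := congrArg Matrix.toBlocks₂₂ h
    simp only [Matrix.toBlocks_fromBlocks₂₂, Matrix.mul_zero, Matrix.zero_mul,
      add_zero, zero_add] at h2
    rw [hBskew j hj, hBskew k hk] at h2
    simp only [Matrix.neg_mul, Matrix.mul_neg, neg_neg] at h2
    exact neg_eq_iff_eq_neg.mp h2
  · -- A commutes with B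
    intro j k hk
    have h := hFscomm ⟨p + (j : ℕ), by omega⟩ ⟨(k : ℕ), by omega⟩
      (hcomm _ _ (Or.inr ⟨by simp, by simpa using k.isLt⟩))
    rw [hFA' j, hFB' k (by omega), Matrix.fromBlocks_multiply,
      Matrix.fromBlocks_multiply] at h
    have h2 := congrArg Matrix.toBlocks₁₂ h
    simpa using h2
end

section
/- Consider (p,q) = (1,1) with basis matrices S_1 = diag(1_{k_1,k_2}, 1_{k_3,k_4}), S_2 = diag(1_{k_1,k_2}, −1_{k_3,k_4}) where 1_{a,b} = diag(1_a, −1_b). Write w = (u,v). If linear forms f_1(w), f_2(w) satisfy f_1(w)·S_1[w] + f_2(w)·S_2[w] ≡ 0 and are not both zero, then either k_1 + k_2 = 0 or k_3 + k_4 = 0 (equivalently S_1 = ±S_2). -/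
open Matrix BigOperators

/-- For `(p,q) = (1,1)` with `S_1 = diag(1_{k1,k2}, 1_{k3,k4})` and
`S_2 = diag(1_{k1,k2}, −1_{k3,k4})`: if linear forms `f_1, f_2`, not both zero, satisfy
`f_1(w) S_1[w] + f_2(w) S_2[w] ≡ 0`, then `k1 + k2 = 0` or `k3 + k4 = 0`. -/
theorem degenerate_one_one (k1 k2 k3 k4 : ℕ)
    (s1 s2 : Fin (k1 + k2 + k3 + k4) → ℝ)
    (hs1 : ∀ i, s1 i = if (i : ℕ) < k1 then 1
      else if (i : ℕ) < k1 + k2 then -1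
      else if (i : ℕ) < k1 + k2 + k3 then 1 else -1)
    (hs2 : ∀ i, s2 i = if (i : ℕ) < k1 then 1
      else if (i : ℕ) < k1 + k2 then -1
      else if (i : ℕ) < k1 + k2 + k3 then -1 else 1)
    (f1 f2 : (Fin (k1 + k2 + k3 + k4) → ℝ) →ₗ[ℝ] ℝ)
    (hrel : ∀ w : Fin (k1 + k2 + k3 + k4) → ℝ,
      f1 w * (∑ i, s1 i * w i ^ 2) + f2 w * (∑ i, s2 i * w i ^ 2) = 0)
    (hne : ¬ (f1 = 0 ∧ f2 = 0)) :
    k1 + k2 = 0 ∨ k3 + k4 = 0 := by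
  by_contra hcon
  push_neg at hcon
  obtain ⟨hk12, hk34⟩ := hcon
  have key : ∀ (i j : Fin (k1 + k2 + k3 + k4)), (i : ℕ) < k1 + k2 → k1 + k2 ≤ (j : ℕ) →
      f1 (Pi.single i 1) = 0 ∧ f2 (Pi.single i 1) = 0 ∧
      f1 (Pi.single j 1) = 0 ∧ f2 (Pi.single j 1) = 0 := by
    intro i j hi hj
    have hij : i ≠ j := by
      intro h; rw [h] at hi; omega
    set ε := s1 i with hεdef
    set δ := s1 j with hδdef
    have hε2 : ε * ε = 1 := by
      rw [hεdef, hs1]; split_ifs <;> norm_num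
    have hδ2 : δ * δ = 1 := by
      rw [hδdef, hs1]; split_ifs <;> norm_num
    have hεs2 : s2 i = ε := by
      rw [hεdef, hs1, hs2]
      split_ifs with h1 h2 h3 <;> first | (exfalso; omega) | rfl
    have hδs2 : s2 j = -δ := by
      rw [hδdef, hs1, hs2]
      split_ifs with h1 h2 h3 <;> first | (exfalso; omega) | norm_num
    have hsum : ∀ (s : Fin (k1 + k2 + k3 + k4) → ℝ) (a b : ℝ),
        (∑ x, s x * (a • (Pi.single i 1 : Fin (k1 + k2 + k3 + k4) → ℝ) + b • (Pi.single j 1 : Fin (k1 + k2 + k3 + k4) → ℝ)) x ^ 2)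
          = s i * a ^ 2 + s j * b ^ 2 := by
      intro s a b
      have hval : ∀ x, (a • (Pi.single i 1 : Fin (k1 + k2 + k3 + k4) → ℝ) + b • (Pi.single j 1 : Fin (k1 + k2 + k3 + k4) → ℝ)) x
          = (if x = i then a else 0) + (if x = j then b else 0) := by
        intro x
        simp only [Pi.add_apply, Pi.smul_apply, Pi.single_apply, smul_eq_mul]
        split_ifs <;> ring
      rw [← Finset.sum_subset (Finset.subset_univ ({i, j} : Finset _))]
      · rw [Finset.sum_pair hij, hval i, hval j]
        simp [hij, hij.symm]
      · intro x _ hx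
        simp only [Finset.mem_insert, Finset.mem_singleton, not_or] at hx
        rw [hval x]
        simp [hx.1, hx.2]
    set A1 := f1 ((Pi.single i 1 : Fin (k1 + k2 + k3 + k4) → ℝ)) with hA1
    set B1 := f1 ((Pi.single j 1 : Fin (k1 + k2 + k3 + k4) → ℝ)) with hB1
    set A2 := f2 ((Pi.single i 1 : Fin (k1 + k2 + k3 + k4) → ℝ)) with hA2
    set B2 := f2 ((Pi.single j 1 : Fin (k1 + k2 + k3 + k4) → ℝ)) with hB2
    have E : ∀ a b : ℝ,
        (a * A1 + b * B1) * (ε * a ^ 2 + δ * b ^ 2)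
          + (a * A2 + b * B2) * (ε * a ^ 2 - δ * b ^ 2) = 0 := by
      intro a b
      have h := hrel (a • (Pi.single i 1 : Fin (k1 + k2 + k3 + k4) → ℝ) + b • (Pi.single j 1 : Fin (k1 + k2 + k3 + k4) → ℝ))
      rw [hsum s1, hsum s2, hεs2, hδs2] at h
      rw [← hεdef, ← hδdef] at h
      simp only [map_add, _root_.map_smul, smul_eq_mul, ← hA1, ← hB1, ← hA2, ← hB2] at h
      linear_combination h
    have h10 := E 1 0
    have h01 := E 0 1
    have h11 := E 1 1
    have h1m := E 1 (-1)
    have hA : A1 + A2 = 0 := by linear_combination ε * h10 - (A1 + A2) * hε2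
    have hB : B1 - B2 = 0 := by linear_combination δ * h01 - (B1 - B2) * hδ2
    have hA' : A1 - A2 = 0 := by
      linear_combination (δ/2) * h11 + (δ/2) * h1m - ε * δ * hA - (A1 - A2) * hδ2
    have hB' : B1 + B2 = 0 := by
      linear_combination (ε/2) * h11 - (ε/2) * h1m - ε * δ * hB - (B1 + B2) * hε2
    refine ⟨by linarith, by linarith, by linarith, by linarith⟩
  apply hne
  constructor
  · apply (Pi.basisFun ℝ (Fin (k1 + k2 + k3 + k4))).ext
    intro x
    simp only [Pi.basisFun_apply, LinearMap.zero_apply]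
    rcases lt_or_ge (x : ℕ) (k1 + k2) with hx | hx
    · exact (key x ⟨k1 + k2, by omega⟩ hx (by exact le_refl _)).1
    · exact (key ⟨0, by omega⟩ x (by exact Nat.pos_of_ne_zero hk12) hx).2.2.1
  · apply (Pi.basisFun ℝ (Fin (k1 + k2 + k3 + k4))).ext
    intro x
    simp only [Pi.basisFun_apply, LinearMap.zero_apply]
    rcases lt_or_ge (x : ℕ) (k1 + k2) with hx | hx
    · exact (key x ⟨k1 + k2, by omega⟩ hx (by exact le_refl _)).2.1
    · exact (key ⟨0, by omega⟩ x (by exact Nat.pos_of_ne_zero hk12) hx).2.2.2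
end

section
/- Let S_1,...,S_{p+q} be real symmetric m×m matrices satisfying the Clifford relations, and suppose q = 0 and p ≥ 2. Then there is no nontrivial relation Σ_{i=1}^p S_i[w] f_i(w) ≡ 0 with f_i linear forms not all zero. (Equivalently: the p quadratic forms S_1[w],...,S_p[w] admit no nonzero syzygy with linear coefficients.) -/
open Matrix BigOperators

/-- For `q = 0` and `p ≥ 2`, the quadratic forms `S_i[w]` admit no nonzero
syzygy with linear coefficients: if `∑ i, S_i[w] f_i(w) ≡ 0` then all `f_i = 0`. -/
theorem no_syzygy_definite_case (p m : ℕ) (hp : 2 ≤ p)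
    (S : Fin p → Matrix (Fin m) (Fin m) ℝ)
    (hsym : ∀ i, (S i)ᵀ = S i)
    (hsq : ∀ i, S i * S i = 1)
    (hanti : ∀ i j : Fin p, i ≠ j → S i * S j = -(S j * S i))
    (f : Fin p → ((Fin m → ℝ) →ₗ[ℝ] ℝ))
    (hrel : ∀ w : Fin m → ℝ, ∑ i : Fin p, (w ⬝ᵥ (S i).mulVec w) * f i w = 0) :
    ∀ i, f i = 0 := by
  intro j
  rcases Nat.eq_zero_or_pos m with hm | hm
  · subst hm
    refine LinearMap.ext fun w => ?_
    rw [Subsingleton.elim w (0 : Fin 0 → ℝ), map_zero, LinearMap.zero_apply]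
  haveI : Nontrivial (Fin p) := ⟨⟨⟨0, by omega⟩, ⟨1, by omega⟩, by simp [Fin.ext_iff]⟩⟩
  obtain ⟨i₀, hi₀⟩ := exists_ne j
  have hdot : ∀ (i : Fin p) (x y : Fin m → ℝ),
      ((S i) *ᵥ x) ⬝ᵥ y = x ⬝ᵥ ((S i) *ᵥ y) := by
    intro i x y
    rw [← hsym i, Matrix.mulVec_transpose, ← Matrix.dotProduct_mulVec, hsym]
  have hS2 : ∀ (i : Fin p) (x : Fin m → ℝ), (S i) *ᵥ ((S i) *ᵥ x) = x := by
    intro i x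
    rw [Matrix.mulVec_mulVec, hsq, Matrix.one_mulVec]
  have hone : (fun _ : Fin m => (1:ℝ)) ≠ 0 := by
    intro h
    have := congrFun h ⟨0, hm⟩
    norm_num at this
  -- S j is not the (±) identity operator
  have hSfix : ∀ (ε : ℝ), ε ≠ 0 → (∀ x : Fin m → ℝ, (S j) *ᵥ x = ε • x) → False := by
    intro ε hε hfix
    have hzero : ∀ x : Fin m → ℝ, (S i₀) *ᵥ x = 0 := by
      intro x
      have h1 : (S i₀) *ᵥ ((S j) *ᵥ x) = -((S j) *ᵥ ((S i₀) *ᵥ x)) := by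
        rw [Matrix.mulVec_mulVec, Matrix.mulVec_mulVec, hanti i₀ j hi₀, Matrix.neg_mulVec]
      rw [hfix x, hfix ((S i₀) *ᵥ x), Matrix.mulVec_smul] at h1
      ext k
      have h2 := congrFun h1 k
      simp only [Pi.smul_apply, Pi.neg_apply, smul_eq_mul, Pi.zero_apply] at h2 ⊢
      have h3 : ε * ((S i₀) *ᵥ x) k = 0 := by linarith [h2]
      exact (mul_eq_zero.mp h3).resolve_left hε
    have h2 := hS2 i₀ (fun _ => (1:ℝ))
    rw [hzero] at h2
    exact hone h2.symm
  have hnotpos : ∃ x : Fin m → ℝ, (S j) *ᵥ x ≠ x := by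
    by_contra h
    push_neg at h
    exact hSfix 1 one_ne_zero (by intro x; rw [one_smul]; exact h x)
  have hnotneg : ∃ x : Fin m → ℝ, (S j) *ᵥ x ≠ -x := by
    by_contra h
    push_neg at h
    exact hSfix (-1) (by norm_num) (by intro x; rw [neg_one_smul]; exact h x)
  -- expansion lemmas
  have hexpadd : ∀ (i : Fin p) (x y : Fin m → ℝ),
      (x + y) ⬝ᵥ (S i) *ᵥ (x + y)
        = x ⬝ᵥ (S i) *ᵥ x + x ⬝ᵥ (S i) *ᵥ y + y ⬝ᵥ (S i) *ᵥ x + y ⬝ᵥ (S i) *ᵥ y := by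
    intro i x y
    simp only [Matrix.mulVec_add, dotProduct_add, add_dotProduct]
    ring
  have hexpsub : ∀ (i : Fin p) (x y : Fin m → ℝ),
      (x - y) ⬝ᵥ (S i) *ᵥ (x - y)
        = x ⬝ᵥ (S i) *ᵥ x - x ⬝ᵥ (S i) *ᵥ y - y ⬝ᵥ (S i) *ᵥ x + y ⬝ᵥ (S i) *ᵥ y := by
    intro i x y
    simp only [Matrix.mulVec_sub, dotProduct_sub, sub_dotProduct]
    ring
  -- the key identity
  have key : ∀ w : Fin m → ℝ,
      (w ⬝ᵥ (S j) *ᵥ w) * f j ((S j) *ᵥ w) + (w ⬝ᵥ w) * f j w = 0 := by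
    intro w
    set u := (S j) *ᵥ w with hu
    have hb0 : ∀ i : Fin p, i ≠ j → w ⬝ᵥ (S i) *ᵥ u = 0 := by
      intro i hij
      have h1 : w ⬝ᵥ (S i) *ᵥ u = w ⬝ᵥ (S i * S j) *ᵥ w := by
        rw [hu, Matrix.mulVec_mulVec]
      have h2 : w ⬝ᵥ (S i * S j) *ᵥ w = -(w ⬝ᵥ (S i * S j) *ᵥ w) := by
        conv_lhs => rw [show S i * S j = -((S i * S j)ᵀ) by
          rw [Matrix.transpose_mul, hsym, hsym, hanti j i (Ne.symm hij), neg_neg]]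
        rw [Matrix.neg_mulVec, dotProduct_neg, Matrix.mulVec_transpose,
          dotProduct_comm, ← Matrix.dotProduct_mulVec]
      rw [h1]
      linarith [h2]
    have hb2 : ∀ i : Fin p, u ⬝ᵥ (S i) *ᵥ w = w ⬝ᵥ (S i) *ᵥ u := by
      intro i
      rw [dotProduct_comm, hdot]
    have hc0 : ∀ i : Fin p, i ≠ j → u ⬝ᵥ (S i) *ᵥ u = -(w ⬝ᵥ (S i) *ᵥ w) := by
      intro i hij
      rw [hu, hdot j, Matrix.mulVec_mulVec, Matrix.mulVec_mulVec]
      rw [show S j * S i * S j = -(S i) by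
        rw [hanti j i (Ne.symm hij), neg_mul, mul_assoc, hsq, mul_one]]
      rw [Matrix.neg_mulVec, dotProduct_neg]
    have hcj : u ⬝ᵥ (S j) *ᵥ u = w ⬝ᵥ (S j) *ᵥ w := by
      rw [hu, hS2 j w, dotProduct_comm]
    have hbj : w ⬝ᵥ (S j) *ᵥ u = w ⬝ᵥ w := by
      rw [hu, hS2 j w]
    have hsum : ∑ i : Fin p,
        (((w+u) ⬝ᵥ (S i) *ᵥ (w+u)) * f i (w+u) - ((w-u) ⬝ᵥ (S i) *ᵥ (w-u)) * f i (w-u)) = 0 := by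
      rw [Finset.sum_sub_distrib, hrel (w+u), hrel (w-u), sub_zero]
    have hsingle : ∑ i : Fin p,
        (((w+u) ⬝ᵥ (S i) *ᵥ (w+u)) * f i (w+u) - ((w-u) ⬝ᵥ (S i) *ᵥ (w-u)) * f i (w-u))
        = ((w+u) ⬝ᵥ (S j) *ᵥ (w+u)) * f j (w+u) - ((w-u) ⬝ᵥ (S j) *ᵥ (w-u)) * f j (w-u) := by
      apply Finset.sum_eq_single_of_mem j (Finset.mem_univ j)
      intro i _ hij
      rw [hexpadd, hexpsub, map_add, map_sub, hb2 i, hb0 i hij, hc0 i hij]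
      ring
    rw [hsingle, hexpadd, hexpsub, map_add, map_sub, hb2 j, hbj, hcj] at hsum
    linear_combination hsum / 4
  -- sum and difference identities
  have key2 : ∀ w : Fin m → ℝ,
      (w ⬝ᵥ (S j) *ᵥ w) * f j w + (w ⬝ᵥ w) * f j ((S j) *ᵥ w) = 0 := by
    intro w
    have k2 := key ((S j) *ᵥ w)
    rw [hS2 j w] at k2
    have e1 : ((S j) *ᵥ w) ⬝ᵥ w = w ⬝ᵥ (S j) *ᵥ w := by rw [hdot]
    have e2 : ((S j) *ᵥ w) ⬝ᵥ ((S j) *ᵥ w) = w ⬝ᵥ w := by rw [hdot, hS2]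
    rw [e1, e2] at k2
    exact k2
  have hNQ : ∀ w : Fin m → ℝ, (S j) *ᵥ w ≠ -w → w ⬝ᵥ w + w ⬝ᵥ (S j) *ᵥ w ≠ 0 := by
    intro w hw h0
    apply hw
    have e2 : ((S j) *ᵥ w) ⬝ᵥ ((S j) *ᵥ w) = w ⬝ᵥ w := by rw [hdot, hS2]
    have e1 : ((S j) *ᵥ w) ⬝ᵥ w = w ⬝ᵥ (S j) *ᵥ w := by rw [hdot]
    have hz : (w + (S j) *ᵥ w) ⬝ᵥ (w + (S j) *ᵥ w) = 0 := by
      rw [dotProduct_add, add_dotProduct, add_dotProduct, e1, e2]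
      linarith [h0]
    have hz2 := dotProduct_self_eq_zero.mp hz
    rw [add_comm] at hz2
    exact eq_neg_of_add_eq_zero_left hz2
  have hNQ' : ∀ w : Fin m → ℝ, (S j) *ᵥ w ≠ w → w ⬝ᵥ w - w ⬝ᵥ (S j) *ᵥ w ≠ 0 := by
    intro w hw h0
    apply hw
    have e2 : ((S j) *ᵥ w) ⬝ᵥ ((S j) *ᵥ w) = w ⬝ᵥ w := by rw [hdot, hS2]
    have e1 : ((S j) *ᵥ w) ⬝ᵥ w = w ⬝ᵥ (S j) *ᵥ w := by rw [hdot]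
    have hz : (w - (S j) *ᵥ w) ⬝ᵥ (w - (S j) *ᵥ w) = 0 := by
      rw [dotProduct_sub, sub_dotProduct, sub_dotProduct, e1, e2]
      linarith [h0]
    have := dotProduct_self_eq_zero.mp hz
    rw [sub_eq_zero] at this
    exact this.symm
  have hplus : ∀ w : Fin m → ℝ, (S j) *ᵥ w ≠ -w → f j w + f j ((S j) *ᵥ w) = 0 := by
    intro w hw
    have k1 := key w
    have k2 := key2 w
    have hfac : (w ⬝ᵥ w + w ⬝ᵥ (S j) *ᵥ w) * (f j w + f j ((S j) *ᵥ w)) = 0 := by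
      linear_combination k1 + k2
    rcases mul_eq_zero.mp hfac with h | h
    · exact absurd h (hNQ w hw)
    · exact h
  have hminus : ∀ w : Fin m → ℝ, (S j) *ᵥ w ≠ w → f j w - f j ((S j) *ᵥ w) = 0 := by
    intro w hw
    have k1 := key w
    have k2 := key2 w
    have hfac : (w ⬝ᵥ w - w ⬝ᵥ (S j) *ᵥ w) * (f j w - f j ((S j) *ᵥ w)) = 0 := by
      linear_combination k1 - k2
    rcases mul_eq_zero.mp hfac with h | h
    · exact absurd h (hNQ' w hw)
    · exact h
  obtain ⟨w₀, hw₀⟩ := hnotneg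
  obtain ⟨w₁, hw₁⟩ := hnotpos
  have hpz : ∀ w : Fin m → ℝ, f j w + f j ((S j) *ᵥ w) = 0 := by
    intro w
    by_cases hcase : (S j) *ᵥ w = -w
    · have h1 : (S j) *ᵥ (w + w₀) ≠ -(w + w₀) := by
        intro hbad
        apply hw₀
        rw [Matrix.mulVec_add, hcase, neg_add] at hbad
        have := add_left_cancel hbad
        exact this
      have h2 := hplus (w + w₀) h1
      have h3 := hplus w₀ hw₀
      rw [Matrix.mulVec_add, map_add, map_add] at h2
      linarith
    · exact hplus w hcase
  have hmz : ∀ w : Fin m → ℝ, f j w - f j ((S j) *ᵥ w) = 0 := by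
    intro w
    by_cases hcase : (S j) *ᵥ w = w
    · have h1 : (S j) *ᵥ (w + w₁) ≠ (w + w₁) := by
        intro hbad
        apply hw₁
        rw [Matrix.mulVec_add, hcase] at hbad
        exact add_left_cancel hbad
      have h2 := hminus (w + w₁) h1
      have h3 := hminus w₁ hw₁
      rw [Matrix.mulVec_add, map_add, map_add] at h2
      linarith
    · exact hminus w hcase
  refine LinearMap.ext fun w => ?_
  have h1 := hpz w
  have h2 := hmz w
  simp only [LinearMap.zero_apply]
  linarith
end

section
/- Let S_1,...,S_{p+q} satisfy the Clifford relations, let Q(w) = (S_1[w],...,S_{p+q}[w]) : ℝ^m → ℝ^{p+q}, and for i < j let Y = S_iS_j. Then Q is equivariant in the infinitesimal sense: for all w ∈ ℝ^m, d/dt|_{t=0} Q(exp(tY)w) = X_{ij} · Q(w), where X_{ij} = 2E_{ij} − 2ε_iε_jE_{ji} ∈ so(p,q). -/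
open Matrix BigOperators


lemma exp_entry_hasDerivAt {n : ℕ} (Y : Matrix (Fin n) (Fin n) ℝ) (a b : Fin n) :
    HasDerivAt (fun t : ℝ => NormedSpace.exp (t • Y) a b) (Y a b) 0 := by
  letI : SeminormedRing (Matrix (Fin n) (Fin n) ℝ) := Matrix.linftyOpSemiNormedRing
  letI : NormedRing (Matrix (Fin n) (Fin n) ℝ) := Matrix.linftyOpNormedRing
  letI : NormedAlgebra ℝ (Matrix (Fin n) (Fin n) ℝ) := Matrix.linftyOpNormedAlgebra
  have h : HasDerivAt (fun t : ℝ => NormedSpace.exp (t • Y)) Y 0 := by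
    have h0 := hasDerivAt_exp_smul_const (𝕂 := ℝ) Y 0
    simp at h0
    exact h0
  let L : Matrix (Fin n) (Fin n) ℝ →ₗ[ℝ] ℝ := Matrix.entryLinearMap ℝ ℝ a b
  have hL := (LinearMap.toContinuousLinearMap L).hasFDerivAt
      (x := NormedSpace.exp ((0:ℝ) • Y))
  have := hL.comp_hasDerivAt 0 h
  simp [L, Function.comp] at this
  exact this

lemma quadform_move {m : ℕ} (A : Matrix (Fin m) (Fin m) ℝ) (x y : Fin m → ℝ) :
    (A.mulVec x) ⬝ᵥ y = x ⬝ᵥ (Aᵀ.mulVec y) := by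
  simp only [dotProduct, Matrix.mulVec, Matrix.transpose_apply,
    Finset.sum_mul, Finset.mul_sum]
  rw [Finset.sum_comm]
  congr 1; ext a; congr 1; ext b; ring

lemma quad_hasDerivAt {m : ℕ} (Y : Matrix (Fin m) (Fin m) ℝ) (w : Fin m → ℝ)
    (Sk : Matrix (Fin m) (Fin m) ℝ) :
    HasDerivAt
      (fun t : ℝ => ((NormedSpace.exp (t • Y)).mulVec w) ⬝ᵥ
          Sk.mulVec ((NormedSpace.exp (t • Y)).mulVec w))
      ((Y.mulVec w) ⬝ᵥ Sk.mulVec w + w ⬝ᵥ Sk.mulVec (Y.mulVec w)) 0 := by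
  have e0 : (NormedSpace.exp ((0:ℝ) • Y)).mulVec w = w := by
    simp [NormedSpace.exp_zero]
  have hvd : ∀ a, HasDerivAt (fun t : ℝ => ((NormedSpace.exp (t • Y)).mulVec w) a)
      ((Y.mulVec w) a) 0 := by
    intro a
    have := HasDerivAt.fun_sum (u := Finset.univ)
      (fun b _ => (exp_entry_hasDerivAt Y a b).mul_const (w b))
    simpa [Matrix.mulVec, dotProduct] using this
  have hu : ∀ a, HasDerivAt (fun t : ℝ => (Sk.mulVec ((NormedSpace.exp (t • Y)).mulVec w)) a)
      ((Sk.mulVec (Y.mulVec w)) a) 0 := by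
    intro a
    have := HasDerivAt.fun_sum (u := Finset.univ)
      (fun b _ => ((hvd b).const_mul (Sk a b)))
    simpa [Matrix.mulVec, dotProduct] using this
  have := HasDerivAt.fun_sum (u := Finset.univ) (fun a _ => (hvd a).mul (hu a))
  rw [e0] at this
  simpa [dotProduct, Finset.sum_add_distrib] using this

/-- Infinitesimal equivariance of the quadratic map `Q`:
`d/dt|₀ Q(exp(t S_iS_j) w) = X_{ij} · Q(w)` with `X_{ij} = 2E_{ij} − 2ε_iε_jE_{ji}`. -/
theorem quadratic_map_equivariance (p q m : ℕ)
    (S : Fin (p + q) → Matrix (Fin m) (Fin m) ℝ)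
    (hsym : ∀ i, (S i)ᵀ = S i)
    (hsq : ∀ i, S i * S i = 1)
    (hcomm : ∀ i j : Fin (p + q),
      (((i : ℕ) < p ∧ p ≤ (j : ℕ)) ∨ (p ≤ (i : ℕ) ∧ (j : ℕ) < p)) →
      S i * S j = S j * S i)
    (hanti : ∀ i j : Fin (p + q), i ≠ j →
      (((i : ℕ) < p ∧ (j : ℕ) < p) ∨ (p ≤ (i : ℕ) ∧ p ≤ (j : ℕ))) →
      S i * S j = -(S j * S i))
    (ε : Fin (p + q) → ℝ)
    (hε : ∀ i, ε i = if (i : ℕ) < p then 1 else -1)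
    (Q : (Fin m → ℝ) → (Fin (p + q) → ℝ))
    (hQ : ∀ (w : Fin m → ℝ) (k : Fin (p + q)), Q w k = w ⬝ᵥ (S k).mulVec w) :
    ∀ i j : Fin (p + q), i < j → ∀ w : Fin m → ℝ,
      deriv (fun t : ℝ => Q ((NormedSpace.exp (t • (S i * S j))).mulVec w)) 0
        = ((2 : ℝ) • Matrix.single i j (1 : ℝ)
            - (2 * ε i * ε j) • Matrix.single j i (1 : ℝ)).mulVec (Q w) := by
  intro i j hij w
  have hij' : i ≠ j := ne_of_lt hij
  have hswap : ∀ a b : Fin (p+q), a ≠ b →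
      S a * S b = (if ((a:ℕ) < p ↔ (b:ℕ) < p) then (-1:ℝ) else 1) • (S b * S a) := by
    intro a b hab
    by_cases ha : (a:ℕ) < p <;> by_cases hb : (b:ℕ) < p
    · simpa [ha, hb] using hanti a b hab (Or.inl ⟨ha, hb⟩)
    · simpa [ha, hb] using hcomm a b (Or.inl ⟨ha, le_of_not_gt hb⟩)
    · simpa [ha, hb] using hcomm a b (Or.inr ⟨le_of_not_gt ha, hb⟩)
    · simpa [ha, hb] using hanti a b hab (Or.inr ⟨le_of_not_gt ha, le_of_not_gt hb⟩)
  have hQd : HasDerivAt (fun t : ℝ => Q ((NormedSpace.exp (t • (S i * S j))).mulVec w))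
      (fun k => (((S i * S j)).mulVec w) ⬝ᵥ (S k).mulVec w
        + w ⬝ᵥ (S k).mulVec (((S i * S j)).mulVec w)) 0 := by
    rw [hasDerivAt_pi]
    intro k
    simp only [hQ]
    exact quad_hasDerivAt (S i * S j) w (S k)
  rw [hQd.deriv]
  funext k
  have hstd : ∀ (a b : Fin (p+q)),
      ((Matrix.single a b (1:ℝ)).mulVec (Q w)) k = if k = a then Q w b else 0 := by
    intro a b
    simp [Matrix.mulVec, dotProduct, Matrix.single, ite_and, eq_comm,
      Finset.sum_ite_eq]
  have key : (S j * S i) * S k + S k * (S i * S j) =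
      if k = i then (2:ℝ) • S j else if k = j then (-(2 * ε i * ε j)) • S i else 0 := by
    rcases eq_or_ne k i with rfl | hki
    · rw [if_pos rfl, mul_assoc, hsq, mul_one, ← mul_assoc, hsq, one_mul, two_smul]
    · rw [if_neg hki]
      rcases eq_or_ne k j with hkj | hkj
      · rw [if_pos hkj, hkj, mul_assoc]
        by_cases hi : (i:ℕ) < p <;> by_cases hj2 : (j:ℕ) < p
        · rw [hanti i j hij' (Or.inl ⟨hi, hj2⟩), mul_neg, ← mul_assoc, hsq, one_mul,
            hε, hε, if_pos hi, if_pos hj2]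
          module
        · rw [hcomm i j (Or.inl ⟨hi, le_of_not_gt hj2⟩), ← mul_assoc, hsq, one_mul,
            hε, hε, if_pos hi, if_neg hj2]
          module
        · rw [hcomm i j (Or.inr ⟨le_of_not_gt hi, hj2⟩), ← mul_assoc, hsq, one_mul,
            hε, hε, if_neg hi, if_pos hj2]
          module
        · rw [hanti i j hij' (Or.inr ⟨le_of_not_gt hi, le_of_not_gt hj2⟩), mul_neg,
            ← mul_assoc, hsq, one_mul, hε, hε, if_neg hi, if_neg hj2]
          module
      · rw [if_neg hkj]
        rw [hswap j i hij'.symm, smul_mul_assoc, ← mul_assoc, hswap k i hki, smul_mul_assoc,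
          mul_assoc (S i) (S k) (S j), hswap k j hkj, mul_smul_comm, smul_smul,
          mul_assoc (S i) (S j) (S k), ← add_smul]
        have hc : ((if ((j:ℕ) < p ↔ (i:ℕ) < p) then (-1:ℝ) else 1)
            + (if ((k:ℕ) < p ↔ (i:ℕ) < p) then (-1:ℝ) else 1)
              * (if ((k:ℕ) < p ↔ (j:ℕ) < p) then (-1:ℝ) else 1)) = 0 := by
          by_cases hi : (i:ℕ) < p <;> by_cases hj2 : (j:ℕ) < p <;>
            by_cases hk2 : (k:ℕ) < p <;> norm_num [hi, hj2, hk2]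
        rw [hc, zero_smul]
  have lhs_eq : (((S i * S j)).mulVec w) ⬝ᵥ (S k).mulVec w
      + w ⬝ᵥ (S k).mulVec (((S i * S j)).mulVec w)
      = w ⬝ᵥ (((S j * S i) * S k + S k * (S i * S j)).mulVec w) := by
    rw [quadform_move, Matrix.transpose_mul, hsym i, hsym j, Matrix.mulVec_mulVec,
      Matrix.mulVec_mulVec, ← dotProduct_add, ← Matrix.add_mulVec]
  show (((S i * S j)).mulVec w) ⬝ᵥ (S k).mulVec w
      + w ⬝ᵥ (S k).mulVec (((S i * S j)).mulVec w) = _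
  rw [lhs_eq, key, Matrix.sub_mulVec, Matrix.smul_mulVec, Matrix.smul_mulVec,
    Pi.sub_apply, Pi.smul_apply, Pi.smul_apply, hstd, hstd]
  rcases eq_or_ne k i with hki | hki
  · rw [hki, if_pos rfl, if_pos rfl, if_neg hij', Matrix.smul_mulVec, dotProduct_smul,
      hQ]
    simp
  · rw [if_neg hki, if_neg hki]
    rcases eq_or_ne k j with hkj | hkj
    · rw [hkj, if_pos rfl, if_pos rfl, Matrix.smul_mulVec, dotProduct_smul, hQ]
      simp
      try ring
    · rw [if_neg hkj, if_neg hkj]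
      simp
end

section
/- Let A be the commutant {X ∈ M(m,ℝ) : ρ(Y)X = Xρ(Y) for all even Y ∈ R_{p,q}^+}, where ρ is a representation of R_{p,q} = C_p ⊗ C_q by matrices with each S_i = ρ(e_i) symmetric. If r ∈ R_{p,q} is an invertible odd element, then {X ∈ M(m,ℝ) : XᵀS_i + S_iX = 0 for all i} = {X ∈ A : Xᵀρ(r) + ρ(r)X = 0}. -/
open Matrix BigOperators

/-- Lemma 6.1: Let `A` be the commutant of the even products `S_jS_k` and
let `R = ρ(r)` be the image of an invertible odd element, i.e. `R = S_{i₀} R'` with `R'`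
invertible and commuting with every member of `A` (as `ρ(e_{i₀} r)` is even). Then
`{X : Xᵀ S_i + S_i X = 0 for all i} = {X ∈ A : Xᵀ R + R X = 0}`. -/
theorem h_eq_skew_in_commutant (p q m : ℕ)
    (S : Fin (p + q) → Matrix (Fin m) (Fin m) ℝ)
    (hsym : ∀ i, (S i)ᵀ = S i)
    (hsq : ∀ i, S i * S i = 1)
    (hcomm : ∀ i j : Fin (p + q),
      (((i : ℕ) < p ∧ p ≤ (j : ℕ)) ∨ (p ≤ (i : ℕ) ∧ (j : ℕ) < p)) →
      S i * S j = S j * S i)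
    (hanti : ∀ i j : Fin (p + q), i ≠ j →
      (((i : ℕ) < p ∧ (j : ℕ) < p) ∨ (p ≤ (i : ℕ) ∧ p ≤ (j : ℕ))) →
      S i * S j = -(S j * S i))
    (i₀ : Fin (p + q)) (R R' : Matrix (Fin m) (Fin m) ℝ)
    (hR : R = S i₀ * R')
    (hR' : IsUnit R')
    (hcen : ∀ X : Matrix (Fin m) (Fin m) ℝ,
      (∀ j k : Fin (p + q), X * (S j * S k) = (S j * S k) * X) → X * R' = R' * X) :
    {X : Matrix (Fin m) (Fin m) ℝ | ∀ i, Xᵀ * S i + S i * X = 0}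
      = {X : Matrix (Fin m) (Fin m) ℝ |
          (∀ j k : Fin (p + q), X * (S j * S k) = (S j * S k) * X) ∧
          Xᵀ * R + R * X = 0} := by
  ext X
  simp only [Set.mem_setOf_eq]
  constructor
  · intro h
    have hX : ∀ i, Xᵀ = -(S i * X * S i) := by
      intro i
      have h1 : Xᵀ * S i = -(S i * X) := eq_neg_of_add_eq_zero_left (h i)
      calc Xᵀ = Xᵀ * S i * S i := by rw [mul_assoc, hsq, mul_one]
        _ = -(S i * X) * S i := by rw [h1]
        _ = -(S i * X * S i) := by rw [neg_mul]
    have hcommX : ∀ j k : Fin (p + q), X * (S j * S k) = (S j * S k) * X := by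
      intro j k
      have heq : S j * X * S j = S k * X * S k :=
        neg_injective ((hX j).symm.trans (hX k))
      calc X * (S j * S k) = (S j * S j) * X * (S j * S k) := by rw [hsq, one_mul]
        _ = S j * (S j * X * S j) * S k := by noncomm_ring
        _ = S j * (S k * X * S k) * S k := by rw [heq]
        _ = S j * S k * X * (S k * S k) := by noncomm_ring
        _ = (S j * S k) * X := by rw [hsq, mul_one]
    refine ⟨hcommX, ?_⟩
    have hXR' : X * R' = R' * X := hcen X hcommX
    calc Xᵀ * R + R * X = Xᵀ * S i₀ * R' + S i₀ * (X * R') := by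
          rw [hR, hXR']; noncomm_ring
      _ = (Xᵀ * S i₀ + S i₀ * X) * R' := by noncomm_ring
      _ = 0 := by rw [h i₀, zero_mul]
  · rintro ⟨hcommX, hzero⟩
    have hXR' : X * R' = R' * X := hcen X hcommX
    have h0 : (Xᵀ * S i₀ + S i₀ * X) * R' = 0 := by
      calc (Xᵀ * S i₀ + S i₀ * X) * R'
          = Xᵀ * (S i₀ * R') + S i₀ * (X * R') := by noncomm_ring
        _ = Xᵀ * R + R * X := by rw [hR, hXR']; noncomm_ring
        _ = 0 := hzero
    have h1 : Xᵀ * S i₀ + S i₀ * X = 0 :=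
      hR'.mul_right_cancel (by rw [h0, zero_mul])
    have hXT : Xᵀ = -(S i₀ * X * S i₀) := by
      have h2 : Xᵀ * S i₀ = -(S i₀ * X) := eq_neg_of_add_eq_zero_left h1
      calc Xᵀ = Xᵀ * S i₀ * S i₀ := by rw [mul_assoc, hsq, mul_one]
        _ = -(S i₀ * X) * S i₀ := by rw [h2]
        _ = -(S i₀ * X * S i₀) := by rw [neg_mul]
    intro i
    calc Xᵀ * S i + S i * X
        = -(S i₀ * (X * (S i₀ * S i))) + S i * X := by rw [hXT]; noncomm_ring
      _ = -(S i₀ * ((S i₀ * S i) * X)) + S i * X := by rw [hcommX]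
      _ = -((S i₀ * S i₀) * (S i * X)) + S i * X := by noncomm_ring
      _ = 0 := by rw [hsq, one_mul, neg_add_cancel]
end
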